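/- arXiv:2212.07987 — 6 statements merged into one kernel-verified Lean document; each statement's English description precedes it below -/
import Mathlib

section
/- Let ρ be a two-qubit density matrix equal either to the Bell state |Φ⟩⟨Φ| or to σ₂, and let E_γ(ρ) = (1−γ)ρ + (γ/4)·I₄ be the two-qubit depolarizing channel of strength γ ∈ [0,1). Then among all measurements of the form {Π^{(1)}_{a} ⊗ Π^{(2)}_{b}} with {Π^{(1)}_a} and {Π^{(2)}_b} PVMs on the first and second qubit respectively, the computational-basis measurement on both qubits maximizes the mutual information H(P₁) + H(P₂) − H(P₁₂) of the outcome distribution P₁₂(a,b) = tr((Π^{(1)}_a ⊗ Π^{(2)}_b) E_γ(ρ)). -/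
open scoped Kronecker Matrix Classical

noncomputable section

/-- Base-2 Shannon entropy of a finitely supported distribution. -/
def shannon {α : Type*} [Fintype α] (p : α → ℝ) : ℝ :=
  -∑ x, p x * Real.logb 2 (p x)

/-- Base-2 von Neumann entropy of a matrix (junk value `0` if not Hermitian),
computed from the eigenvalues. -/
def vnEntropy {d : Type*} [Fintype d] [DecidableEq d] (ρ : Matrix d d ℂ) : ℝ :=
  if h : ρ.IsHermitian then -∑ k, h.eigenvalues k * Real.logb 2 (h.eigenvalues k) else 0

/-- A projection-valued measure on a finite-dimensional space: a finite family of
mutually orthogonal self-adjoint projections summing to the identity. -/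
structure PVM (ι : Type*) (d : Type*) [Fintype d] [DecidableEq d] where
  [fintype : Fintype ι]
  proj : ι → Matrix d d ℂ
  herm : ∀ a, (proj a).IsHermitian
  idem : ∀ a, proj a * proj a = proj a
  orthogonal : ∀ a b, a ≠ b → proj a * proj b = 0
  complete : ∑ a, proj a = 1

/-- Outcome distribution of a PVM measurement on a state. -/
def pvmProb {ι d : Type*} [Fintype d] [DecidableEq d] (P : PVM ι d)
    (ρ : Matrix d d ℂ) : ι → ℝ :=
  fun a => ((P.proj a * ρ).trace).re

/-- Shannon entropy of the outcome distribution of a PVM measurement. -/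
def pvmEntropy {ι d : Type*} [Fintype d] [DecidableEq d] (P : PVM ι d)
    (ρ : Matrix d d ℂ) : ℝ :=
  letI := P.fintype
  shannon (pvmProb P ρ)

/-- Joint outcome distribution of a product of two local PVMs on a bipartite state. -/
def jointProb {ιA ιB dA dB : Type*} [Fintype dA] [DecidableEq dA] [Fintype dB]
    [DecidableEq dB] (P : PVM ιA dA) (Q : PVM ιB dB)
    (ρ : Matrix (dA × dB) (dA × dB) ℂ) : ιA × ιB → ℝ :=
  fun ab => (((P.proj ab.1 ⊗ₖ Q.proj ab.2) * ρ).trace).re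

/-- Shannon entropy of the joint outcome distribution of a product of two local PVMs. -/
def jointEntropy {ιA ιB dA dB : Type*} [Fintype dA] [DecidableEq dA] [Fintype dB]
    [DecidableEq dB] (P : PVM ιA dA) (Q : PVM ιB dB)
    (ρ : Matrix (dA × dB) (dA × dB) ℂ) : ℝ :=
  letI := P.fintype; letI := Q.fintype
  shannon (jointProb P Q ρ)

/-- Mutual information `H(P_A) + H(P_B) - H(P_{AB})` of the joint outcome distribution
of a product of two local PVMs on a bipartite state. -/
def miOf {ιA ιB dA dB : Type*} [Fintype dA] [DecidableEq dA] [Fintype dB]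
    [DecidableEq dB] (P : PVM ιA dA) (Q : PVM ιB dB)
    (ρ : Matrix (dA × dB) (dA × dB) ℂ) : ℝ :=
  letI := P.fintype; letI := Q.fintype
  shannon (fun a : ιA => ∑ b : ιB, jointProb P Q ρ (a, b)) +
    shannon (fun b : ιB => ∑ a : ιA, jointProb P Q ρ (a, b)) -
    shannon (jointProb P Q ρ)

/-- Measured mutual information: the supremum of `miOf` over all pairs of local PVMs. -/
def measuredMI {dA dB : Type*} [Fintype dA] [DecidableEq dA] [Fintype dB] [DecidableEq dB]
    (ρ : Matrix (dA × dB) (dA × dB) ℂ) : ℝ :=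
  sSup { r : ℝ | ∃ (ιA ιB : Type) (P : PVM ιA dA) (Q : PVM ιB dB), r = miOf P Q ρ }

/-- The computational-basis PVM. -/
def compPVM (d : Type*) [Fintype d] [DecidableEq d] : PVM d d where
  proj x := Matrix.diagonal (fun y => if y = x then (1 : ℂ) else 0)
  herm x := by
    refine Matrix.isHermitian_diagonal_of_self_adjoint _ ?_
    funext y
    by_cases h : y = x <;> simp [h]
  idem x := by
    rw [Matrix.diagonal_mul_diagonal]
    ext y z
    by_cases h : y = z
    · subst h
      by_cases h2 : y = x <;> simp [Matrix.diagonal_apply, h2]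
    · simp [Matrix.diagonal_apply, h]
  orthogonal a b hab := by
    rw [Matrix.diagonal_mul_diagonal]
    have h0 : (fun y => (if y = a then (1:ℂ) else 0) * (if y = b then (1:ℂ) else 0))
        = fun _ => (0:ℂ) := by
      funext y
      by_cases h : y = a <;> by_cases h' : y = b <;> simp_all
    rw [h0, Matrix.diagonal_zero]
  complete := by
    ext y z
    rw [Matrix.sum_apply]
    by_cases h : y = z
    · subst h
      simp [Matrix.diagonal_apply, Matrix.one_apply]
    · simp [Matrix.diagonal_apply, Matrix.one_apply, h]

/-- Amplitudes of the two-qubit Bell state `|Φ⟩ = (|00⟩ + |11⟩)/√2`. -/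
def bellVec : Fin 2 × Fin 2 → ℂ :=
  fun x => if x.1 = x.2 then ((Real.sqrt 2 : ℝ) : ℂ)⁻¹ else 0

/-- The two-qubit Bell state `|Φ⟩⟨Φ|`. -/
def bellState : Matrix (Fin 2 × Fin 2) (Fin 2 × Fin 2) ℂ :=
  Matrix.of fun x y => bellVec x * star (bellVec y)

/-- The two-qubit shared random bit `σ₂ = (|00⟩⟨00| + |11⟩⟨11|)/2`. -/
def sigma2 : Matrix (Fin 2 × Fin 2) (Fin 2 × Fin 2) ℂ :=
  Matrix.of fun x y => if x = y ∧ x.1 = x.2 then (1 : ℂ)/2 else 0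

/-- The two-qubit depolarizing channel `E_γ(ρ) = (1-γ)ρ + (γ/4)I₄`. -/
def depol2 (γ : ℝ) (ρ : Matrix (Fin 2 × Fin 2) (Fin 2 × Fin 2) ℂ) :
    Matrix (Fin 2 × Fin 2) (Fin 2 × Fin 2) ℂ :=
  (1 - (γ : ℂ)) • ρ + ((γ : ℂ)/4) • (1 : Matrix (Fin 2 × Fin 2) (Fin 2 × Fin 2) ℂ)

section Aux
variable (A B : Matrix (Fin 2) (Fin 2) ℂ)

lemma sqrt2_inv_mul : (((Real.sqrt 2 : ℝ) : ℂ))⁻¹ * (((Real.sqrt 2 : ℝ) : ℂ))⁻¹ = 1/2 := by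
  rw [← Complex.ofReal_inv, ← Complex.ofReal_mul, ← mul_inv]
  norm_num [Real.mul_self_sqrt (by norm_num : (0:ℝ) ≤ 2)]

lemma trace_bell : bellState.trace = 1 := by
  simp [bellState, Matrix.trace, Fintype.sum_prod_type, Fin.sum_univ_two, bellVec,
    Complex.conj_ofReal, ← Complex.ofReal_inv]
  rw [← Complex.ofReal_mul, ← mul_inv]
  norm_num [Real.mul_self_sqrt (by norm_num : (0:ℝ) ≤ 2)]

lemma trace_kron_bell :
    ((A ⊗ₖ B) * bellState).trace =
      (A 0 0 * B 0 0 + A 0 1 * B 0 1 + A 1 0 * B 1 0 + A 1 1 * B 1 1) / 2 := by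
  have h2 : (((Real.sqrt 2 : ℝ) : ℂ))⁻¹ ^ 2 = 1/2 := by rw [sq]; exact sqrt2_inv_mul
  simp [bellState, Matrix.trace, Matrix.mul_apply, Fintype.sum_prod_type, Fin.sum_univ_two,
    bellVec, Complex.conj_ofReal, Matrix.kroneckerMap_apply]
  ring_nf
  rw [h2]; ring

lemma trace_kron_sigma2 :
    ((A ⊗ₖ B) * sigma2).trace = (A 0 0 * B 0 0 + A 1 1 * B 1 1) / 2 := by
  simp [sigma2, Matrix.trace, Matrix.mul_apply, Fintype.sum_prod_type, Fin.sum_univ_two,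
    Matrix.kroneckerMap_apply, Prod.ext_iff]
  try ring

lemma trace_sigma2 : sigma2.trace = 1 := by
  simp [sigma2, Matrix.trace, Fintype.sum_prod_type, Fin.sum_univ_two]
  try norm_num

end Aux
/-- Rank-one (or subcases) parametrized form of a qubit projection. -/
def IsR1 (M : Matrix (Fin 2) (Fin 2) ℂ) (p : ℝ) (w : ℂ) : Prop :=
  M 0 0 = (p : ℂ) ∧ M 1 1 = ((1 - p : ℝ) : ℂ) ∧ M 0 1 = w ∧
    M 1 0 = (starRingEnd ℂ) w ∧ Complex.normSq w = p * (1 - p) ∧ 0 ≤ p ∧ p ≤ 1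

lemma qubit_proj_classify (M : Matrix (Fin 2) (Fin 2) ℂ)
    (hH : M.IsHermitian) (hI : M * M = M) :
    M = 0 ∨ M = 1 ∨ ∃ p w, IsR1 M p w := by
  have h10 : M 1 0 = (starRingEnd ℂ) (M 0 1) := (hH.apply 1 0).symm
  have him0 : (M 0 0).im = 0 := by
    have h := congrArg Complex.im (hH.apply 0 0)
    rw [Complex.star_def, Complex.conj_im] at h; linarith
  have him1 : (M 1 1).im = 0 := by
    have h := congrArg Complex.im (hH.apply 1 1)
    rw [Complex.star_def, Complex.conj_im] at h; linarith
  obtain ⟨a, h00⟩ : ∃ a : ℝ, M 0 0 = (a : ℂ) :=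
    ⟨(M 0 0).re, Complex.ext (by simp) (by simp [him0])⟩
  obtain ⟨d, h11⟩ : ∃ d : ℝ, M 1 1 = (d : ℂ) :=
    ⟨(M 1 1).re, Complex.ext (by simp) (by simp [him1])⟩
  obtain ⟨w, h01⟩ : ∃ w : ℂ, M 0 1 = w := ⟨_, rfl⟩
  rw [h01] at h10
  have e00 : (a : ℂ) * a + (Complex.normSq w : ℂ) = (a : ℂ) := by
    have h := congrFun (congrFun hI 0) 0
    rw [Matrix.mul_apply, Fin.sum_univ_two, h00, h01, h10, Complex.mul_conj] at h
    exact h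
  have e11 : (d : ℂ) * d + (Complex.normSq w : ℂ) = (d : ℂ) := by
    have h := congrFun (congrFun hI 1) 1
    rw [Matrix.mul_apply, Fin.sum_univ_two, h11, h01, h10] at h
    rw [show (starRingEnd ℂ) w * w = (Complex.normSq w : ℂ) by
      rw [mul_comm, Complex.mul_conj]] at h
    linear_combination h
  have e01 : w * ((a : ℂ) + d) = w := by
    have h := congrFun (congrFun hI 0) 1
    rw [Matrix.mul_apply, Fin.sum_univ_two, h00, h01, h11] at h
    linear_combination h
  have re00 : a * a + Complex.normSq w = a := by exact_mod_cast e00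
  have re11 : d * d + Complex.normSq w = d := by exact_mod_cast e11
  by_cases hw : w = 0
  · rw [hw] at h01 h10
    rw [hw, Complex.normSq_zero] at re00 re11
    simp only [map_zero] at h10
    have ha' : a = 0 ∨ a = 1 := by
      rcases mul_eq_zero.mp (show a * (a - 1) = 0 by nlinarith) with h | h
      · exact Or.inl h
      · exact Or.inr (by linarith)
    have hd' : d = 0 ∨ d = 1 := by
      rcases mul_eq_zero.mp (show d * (d - 1) = 0 by nlinarith) with h | h
      · exact Or.inl h
      · exact Or.inr (by linarith)
    rcases ha' with ha' | ha' <;> rcases hd' with hd' | hd'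
    · left
      ext i j
      fin_cases i <;> fin_cases j <;> simp [h00, h01, h10, h11, ha', hd']
    · right; right
      exact ⟨0, 0, by simp [h00, ha'], by simp [h11, hd'], h01, by simp [h10], by simp, le_refl 0, zero_le_one⟩
    · right; right
      exact ⟨1, 0, by simp [h00, ha'], by simp [h11, hd'], h01, by simp [h10], by simp, zero_le_one, le_refl 1⟩
    · right; left
      ext i j
      fin_cases i <;> fin_cases j <;> simp [h00, h01, h10, h11, ha', hd', Matrix.one_apply]
  · have had : (a : ℂ) + d = 1 := by
      have := mul_left_cancel₀ hw (e01.trans (mul_one w).symm)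
      exact this
    have hadr : a + d = 1 := by exact_mod_cast had
    refine Or.inr (Or.inr ⟨a, w, h00, ?_, h01, h10, by nlinarith, ?_, ?_⟩)
    · rw [h11]; norm_cast; linarith
    · nlinarith [Complex.normSq_nonneg w]
    · nlinarith [Complex.normSq_nonneg w]
lemma IsR1.trace {M : Matrix (Fin 2) (Fin 2) ℂ} {p : ℝ} {w : ℂ} (h : IsR1 M p w) :
    M.trace = 1 := by
  simp [Matrix.trace, Fin.sum_univ_two, Matrix.diag, h.1, h.2.1]
  try push_cast
  try ring

lemma pvm_classify {ι : Type} (P : PVM ι (Fin 2)) :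
    (∃ a, P.proj a = 1 ∧ ∀ b, b ≠ a → P.proj b = 0) ∨
    (∃ a₀ a₁ p w, a₀ ≠ a₁ ∧ IsR1 (P.proj a₀) p w ∧ P.proj a₁ = 1 - P.proj a₀ ∧
      ∀ b, b ≠ a₀ → b ≠ a₁ → P.proj b = 0) := by
  letI := P.fintype
  by_cases hone : ∃ a, P.proj a = 1
  · obtain ⟨a, ha⟩ := hone
    refine Or.inl ⟨a, ha, fun b hb => ?_⟩
    have := P.orthogonal a b (Ne.symm hb)
    rwa [ha, one_mul] at this
  · push_neg at hone
    have hR1 : ∀ a, P.proj a ≠ 0 → ∃ p w, IsR1 (P.proj a) p w := by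
      intro a ha
      rcases qubit_proj_classify (P.proj a) (P.herm a) (P.idem a) with h | h | h
      · exact absurd h ha
      · exact absurd h (hone a)
      · exact h
    classical
    set S : Finset ι := Finset.univ.filter (fun a => P.proj a ≠ 0) with hS
    have hzero : ∀ b, b ∉ S → P.proj b = 0 := by
      intro b hb
      by_contra h
      exact hb (Finset.mem_filter.mpr ⟨Finset.mem_univ b, h⟩)
    have hsub : ∑ a, P.proj a = ∑ a ∈ S, P.proj a :=
      (Finset.sum_subset (Finset.subset_univ S) (fun x _ hx => hzero x hx)).symm
    have hsum : ∑ a ∈ S, (P.proj a).trace = 2 := by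
      have h1 : ∑ a ∈ S, (P.proj a).trace = (1 : Matrix (Fin 2) (Fin 2) ℂ).trace := by
        rw [← Matrix.trace_sum, ← hsub, P.complete]
      rw [Matrix.trace_one] at h1
      simpa using h1
    have hcard : S.card = 2 := by
      have h2 : ∑ a ∈ S, (P.proj a).trace = (S.card : ℂ) := by
        rw [Finset.sum_congr rfl (fun a ha => ?_), Finset.sum_const, nsmul_eq_mul, mul_one]
        obtain ⟨p, w, hpw⟩ := hR1 a (Finset.mem_filter.mp ha).2
        exact hpw.trace
      rw [h2] at hsum
      exact_mod_cast hsum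
    obtain ⟨a₀, a₁, hne, hSeq⟩ := Finset.card_eq_two.mp hcard
    have ha₀S : a₀ ∈ S := hSeq ▸ Finset.mem_insert_self a₀ {a₁}
    obtain ⟨p, w, hpw⟩ := hR1 a₀ (Finset.mem_filter.mp ha₀S).2
    refine Or.inr ⟨a₀, a₁, p, w, hne, hpw, ?_,
      fun b hb0 hb1 => hzero b (by simp [hSeq, hb0, hb1])⟩
    have hc : P.proj a₀ + P.proj a₁ = 1 := by
      rw [← Finset.sum_pair hne, ← hSeq, ← hsub, P.complete]
    exact eq_sub_of_add_eq (by rw [add_comm]; exact hc)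
lemma one_sub_R1 {M : Matrix (Fin 2) (Fin 2) ℂ} {p : ℝ} {w : ℂ} (h : IsR1 M p w) :
    IsR1 (1 - M) (1 - p) (-w) := by
  obtain ⟨h00, h11, h01, h10, hn, hp0, hp1⟩ := h
  refine ⟨?_, ?_, ?_, ?_, ?_, by linarith, by linarith⟩
  · simp [Matrix.sub_apply, Matrix.one_apply, h00]
  · simp [Matrix.sub_apply, Matrix.one_apply, h11]
    try push_cast
    try ring
  · simp [Matrix.sub_apply, Matrix.one_apply, h01]
  · simp [Matrix.sub_apply, Matrix.one_apply, h10]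
  · simp [hn]; ring

lemma trace_depol_form (γ : ℝ) (ρ : Matrix (Fin 2 × Fin 2) (Fin 2 × Fin 2) ℂ)
    (A B : Matrix (Fin 2) (Fin 2) ℂ) :
    ((A ⊗ₖ B) * depol2 γ ρ).trace
      = (1 - (γ:ℂ)) * ((A ⊗ₖ B) * ρ).trace + ((γ:ℂ)/4) * (A.trace * B.trace) := by
  rw [depol2, mul_add, Matrix.mul_smul, Matrix.mul_smul, mul_one, Matrix.trace_add,
    Matrix.trace_smul, Matrix.trace_smul, Matrix.trace_kronecker, smul_eq_mul, smul_eq_mul]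

lemma re_tr_bell (γ : ℝ) {A B : Matrix (Fin 2) (Fin 2) ℂ} {p q : ℝ} {w v : ℂ}
    (hA : IsR1 A p w) (hB : IsR1 B q v) :
    (((A ⊗ₖ B) * depol2 γ bellState).trace).re
      = (1 - γ) * ((p*q + (1-p)*(1-q))/2 + 1 * (w*v).re) + γ/4 := by
  have hc : ((A ⊗ₖ B) * depol2 γ bellState).trace
      = (((1 - γ) * ((p*q + (1-p)*(1-q))/2 + 1 * (w*v).re) + γ/4 : ℝ) : ℂ) := by
    rw [trace_depol_form, hA.trace, hB.trace, trace_kron_bell,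
      hA.1, hA.2.1, hA.2.2.1, hA.2.2.2.1, hB.1, hB.2.1, hB.2.2.1, hB.2.2.2.1]
    have hwv : w * v + (starRingEnd ℂ) w * (starRingEnd ℂ) v = ((2 * (w*v).re : ℝ) : ℂ) := by
      rw [← map_mul]
      exact_mod_cast Complex.add_conj (w*v)
    push_cast at hwv ⊢
    linear_combination (1 - (γ:ℂ)) / 2 * hwv
  rw [hc, Complex.ofReal_re]

lemma re_tr_sigma2 (γ : ℝ) {A B : Matrix (Fin 2) (Fin 2) ℂ} {p q : ℝ} {w v : ℂ}
    (hA : IsR1 A p w) (hB : IsR1 B q v) :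
    (((A ⊗ₖ B) * depol2 γ sigma2).trace).re
      = (1 - γ) * ((p*q + (1-p)*(1-q))/2 + 0 * (w*v).re) + γ/4 := by
  have hc : ((A ⊗ₖ B) * depol2 γ sigma2).trace
      = (((1 - γ) * ((p*q + (1-p)*(1-q))/2 + 0 * (w*v).re) + γ/4 : ℝ) : ℂ) := by
    rw [trace_depol_form, hA.trace, hB.trace, trace_kron_sigma2, hA.1, hA.2.1, hB.1, hB.2.1]
    push_cast
    ring
  rw [hc, Complex.ofReal_re]

/-- Unified formula for both states. -/
lemma key_form (γ : ℝ) (ρ : Matrix (Fin 2 × Fin 2) (Fin 2 × Fin 2) ℂ)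
    (hρ : ρ = bellState ∨ ρ = sigma2) :
    ∃ κ : ℝ, (κ = 0 ∨ κ = 1) ∧ ∀ (A B : Matrix (Fin 2) (Fin 2) ℂ) (p q : ℝ) (w v : ℂ),
      IsR1 A p w → IsR1 B q v →
      (((A ⊗ₖ B) * depol2 γ ρ).trace).re
        = (1 - γ) * ((p*q + (1-p)*(1-q))/2 + κ * (w*v).re) + γ/4 := by
  rcases hρ with h | h
  · exact ⟨1, Or.inr rfl, fun A B p q w v hA hB => by rw [h]; exact re_tr_bell γ hA hB⟩
  · exact ⟨0, Or.inl rfl, fun A B p q w v hA hB => by rw [h]; exact re_tr_sigma2 γ hA hB⟩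
lemma sum_pair' {ι : Type*} [Fintype ι] (f : ι → ℝ) (a₀ a₁ : ι) (hne : a₀ ≠ a₁)
    (hz : ∀ b, b ≠ a₀ → b ≠ a₁ → f b = 0) :
    ∑ x, f x = f a₀ + f a₁ := by
  classical
  rw [← Finset.sum_pair hne]
  apply (Finset.sum_subset (Finset.subset_univ _) ?_).symm
  intro x _ hx
  simp only [Finset.mem_insert, Finset.mem_singleton] at hx
  push_neg at hx
  exact hz x hx.1 hx.2

lemma shannon_pair {ι : Type*} [Fintype ι] (f : ι → ℝ) (a₀ a₁ : ι) (hne : a₀ ≠ a₁)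
    (hz : ∀ b, b ≠ a₀ → b ≠ a₁ → f b = 0) :
    shannon f = -(f a₀ * Real.logb 2 (f a₀) + f a₁ * Real.logb 2 (f a₁)) := by
  rw [shannon]
  congr 1
  exact sum_pair' _ a₀ a₁ hne (fun b h0 h1 => by rw [hz b h0 h1, zero_mul])

lemma sum_prod_quad {ιA ιB : Type*} [Fintype ιA] [Fintype ιB] (T : ιA × ιB → ℝ)
    (a₀ a₁ : ιA) (b₀ b₁ : ιB) (hna : a₀ ≠ a₁) (hnb : b₀ ≠ b₁)
    (hz1 : ∀ x : ιA × ιB, x.1 ≠ a₀ → x.1 ≠ a₁ → T x = 0)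
    (hz2 : ∀ x : ιA × ιB, x.2 ≠ b₀ → x.2 ≠ b₁ → T x = 0) :
    ∑ x, T x = T (a₀, b₀) + T (a₀, b₁) + (T (a₁, b₀) + T (a₁, b₁)) := by
  rw [Fintype.sum_prod_type]
  have h1 : ∑ a, ∑ b, T (a, b) = (∑ b, T (a₀, b)) + ∑ b, T (a₁, b) :=
    sum_pair' (fun a => ∑ b, T (a, b)) a₀ a₁ hna
      (fun a h0 h1 => Finset.sum_eq_zero fun b _ => hz1 (a, b) h0 h1)
  rw [h1, sum_pair' (fun b => T (a₀, b)) b₀ b₁ hnb (fun b h0 h1 => hz2 (a₀, b) h0 h1),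
    sum_pair' (fun b => T (a₁, b)) b₀ b₁ hnb (fun b h0 h1 => hz2 (a₁, b) h0 h1)]

lemma logb_half : Real.logb 2 (1/2) = -1 := by
  rw [show (1:ℝ)/2 = 2⁻¹ by norm_num, Real.logb_inv, Real.logb_self_eq_one (by norm_num)]
lemma amgm_aux (x y r : ℝ) (hx : 0 ≤ x) (hy : 0 ≤ y) (hr : r^2 ≤ x*y) :
    -(x+y) ≤ 2*r ∧ 2*r ≤ x+y := by
  have h4 : (2*r)^2 ≤ (x+y)^2 := by nlinarith [sq_nonneg (x-y)]
  have habs : |2*r| ≤ x+y := by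
    have h5 := Real.sqrt_le_sqrt h4
    rwa [Real.sqrt_sq_eq_abs, Real.sqrt_sq (by linarith : (0:ℝ) ≤ x+y)] at h5
  exact ⟨neg_le_of_abs_le habs, le_of_abs_le habs⟩

lemma miOf_nondeg (γ : ℝ) (hγ0 : 0 ≤ γ) (hγ1 : γ < 1)
    (ρ : Matrix (Fin 2 × Fin 2) (Fin 2 × Fin 2) ℂ) (hρ : ρ = bellState ∨ ρ = sigma2)
    {ιA ιB : Type} (P : PVM ιA (Fin 2)) (Q : PVM ιB (Fin 2))
    (a₀ a₁ : ιA) (b₀ b₁ : ιB) (p q : ℝ) (w v : ℂ)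
    (hna : a₀ ≠ a₁) (hnb : b₀ ≠ b₁)
    (hA : IsR1 (P.proj a₀) p w) (hA1 : P.proj a₁ = 1 - P.proj a₀)
    (hAz : ∀ b, b ≠ a₀ → b ≠ a₁ → P.proj b = 0)
    (hB : IsR1 (Q.proj b₀) q v) (hB1 : Q.proj b₁ = 1 - Q.proj b₀)
    (hBz : ∀ b, b ≠ b₀ → b ≠ b₁ → Q.proj b = 0) :
    ∃ u, u ∈ Set.Icc (γ/4) (1/2 - γ/4) ∧
      ((w*v).re = 0 → u = (1-γ)*((p*q + (1-p)*(1-q))/2) + γ/4) ∧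
      miOf P Q (depol2 γ ρ)
        = 2 + 2*(u * Real.logb 2 u + (1/2-u) * Real.logb 2 (1/2-u)) := by
  letI := P.fintype
  letI := Q.fintype
  obtain ⟨κ, hκ, hform⟩ := key_form γ ρ hρ
  have hA1' : IsR1 (P.proj a₁) (1-p) (-w) := by rw [hA1]; exact one_sub_R1 hA
  have hB1' : IsR1 (Q.proj b₁) (1-q) (-v) := by rw [hB1]; exact one_sub_R1 hB
  set r : ℝ := κ * (w*v).re with hrdef
  set u : ℝ := (1-γ)*((p*q + (1-p)*(1-q))/2 + r) + γ/4 with hu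
  have j00 : jointProb P Q (depol2 γ ρ) (a₀, b₀) = u := by
    have := hform (P.proj a₀) (Q.proj b₀) p q w v hA hB
    simpa only [jointProb] using this
  have j01 : jointProb P Q (depol2 γ ρ) (a₀, b₁) = 1/2 - u := by
    have := hform (P.proj a₀) (Q.proj b₁) p (1-q) w (-v) hA hB1'
    simp only [jointProb] at this ⊢
    rw [this, mul_neg, Complex.neg_re, hu, hrdef]
    ring
  have j10 : jointProb P Q (depol2 γ ρ) (a₁, b₀) = 1/2 - u := by
    have := hform (P.proj a₁) (Q.proj b₀) (1-p) q (-w) v hA1' hB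
    simp only [jointProb] at this ⊢
    rw [this, neg_mul, Complex.neg_re, hu, hrdef]
    ring
  have j11 : jointProb P Q (depol2 γ ρ) (a₁, b₁) = u := by
    have := hform (P.proj a₁) (Q.proj b₁) (1-p) (1-q) (-w) (-v) hA1' hB1'
    simp only [jointProb] at this ⊢
    rw [this, neg_mul_neg, hu, hrdef]
    ring
  have jz1 : ∀ x : ιA × ιB, x.1 ≠ a₀ → x.1 ≠ a₁ → jointProb P Q (depol2 γ ρ) x = 0 := by
    intro x h0 h1
    simp [jointProb, hAz x.1 h0 h1]
  have jz2 : ∀ x : ιA × ιB, x.2 ≠ b₀ → x.2 ≠ b₁ → jointProb P Q (depol2 γ ρ) x = 0 := by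
    intro x h0 h1
    simp [jointProb, hBz x.2 h0 h1]
  -- bounds
  obtain ⟨_, _, _, _, hnw, hp0, hp1⟩ := hA
  obtain ⟨_, _, _, _, hnv, hq0, hq1⟩ := hB
  have hr2 : r^2 ≤ (p*(1-p))*(q*(1-q)) := by
    rcases hκ with h | h
    · rw [hrdef, h]
      have : (0:ℝ) ≤ (p*(1-p))*(q*(1-q)) :=
        mul_nonneg (mul_nonneg hp0 (by linarith)) (mul_nonneg hq0 (by linarith))
      nlinarith
    · rw [hrdef, h, one_mul]
      have h1 : (w*v).re^2 ≤ Complex.normSq (w*v) := by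
        rw [Complex.normSq_apply]
        nlinarith [sq_nonneg (w*v).im]
      rwa [Complex.normSq_mul, hnw, hnv] at h1
  have hs0 : 0 ≤ (p*q + (1-p)*(1-q))/2 + r := by
    have h := (amgm_aux (p*q) ((1-p)*(1-q)) r (mul_nonneg hp0 hq0)
      (mul_nonneg (by linarith) (by linarith)) (by nlinarith [hr2])).1
    linarith
  have hs1 : (p*q + (1-p)*(1-q))/2 + r ≤ 1/2 := by
    have h := (amgm_aux (p*(1-q)) ((1-p)*q) r (mul_nonneg hp0 (by linarith))
      (mul_nonneg (by linarith) hq0) (by nlinarith [hr2])).2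
    nlinarith
  have humem : u ∈ Set.Icc (γ/4) (1/2 - γ/4) := by
    constructor
    · have h := mul_nonneg (by linarith : (0:ℝ) ≤ 1-γ) hs0
      rw [hu]; linarith
    · have h := mul_le_mul_of_nonneg_left hs1 (by linarith : (0:ℝ) ≤ 1-γ)
      rw [hu]; linarith
  -- marginals
  have mA0 : ∑ b, jointProb P Q (depol2 γ ρ) (a₀, b) = 1/2 := by
    rw [sum_pair' (fun b => jointProb P Q (depol2 γ ρ) (a₀, b)) b₀ b₁ hnb
      (fun b h0 h1 => jz2 (a₀, b) h0 h1), j00, j01]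
    ring
  have mA1 : ∑ b, jointProb P Q (depol2 γ ρ) (a₁, b) = 1/2 := by
    rw [sum_pair' (fun b => jointProb P Q (depol2 γ ρ) (a₁, b)) b₀ b₁ hnb
      (fun b h0 h1 => jz2 (a₁, b) h0 h1), j10, j11]
    ring
  have mB0 : ∑ a, jointProb P Q (depol2 γ ρ) (a, b₀) = 1/2 := by
    rw [sum_pair' (fun a => jointProb P Q (depol2 γ ρ) (a, b₀)) a₀ a₁ hna
      (fun a h0 h1 => jz1 (a, b₀) h0 h1), j00, j10]
    ring
  have mB1 : ∑ a, jointProb P Q (depol2 γ ρ) (a, b₁) = 1/2 := by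
    rw [sum_pair' (fun a => jointProb P Q (depol2 γ ρ) (a, b₁)) a₀ a₁ hna
      (fun a h0 h1 => jz1 (a, b₁) h0 h1), j01, j11]
    ring
  have hSA : shannon (fun a : ιA => ∑ b : ιB, jointProb P Q (depol2 γ ρ) (a, b)) = 1 := by
    rw [shannon_pair _ a₀ a₁ hna
      (fun a h0 h1 => Finset.sum_eq_zero fun b _ => jz1 (a, b) h0 h1), mA0, mA1, logb_half]
    ring
  have hSB : shannon (fun b : ιB => ∑ a : ιA, jointProb P Q (depol2 γ ρ) (a, b)) = 1 := by
    rw [shannon_pair _ b₀ b₁ hnb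
      (fun b h0 h1 => Finset.sum_eq_zero fun a _ => jz2 (a, b) h0 h1), mB0, mB1, logb_half]
    ring
  have hSJ : shannon (jointProb P Q (depol2 γ ρ))
      = -(u * Real.logb 2 u + (1/2 - u) * Real.logb 2 (1/2 - u)
          + ((1/2 - u) * Real.logb 2 (1/2 - u) + u * Real.logb 2 u)) := by
    rw [shannon]
    congr 1
    rw [sum_prod_quad (fun x => jointProb P Q (depol2 γ ρ) x
        * Real.logb 2 (jointProb P Q (depol2 γ ρ) x)) a₀ a₁ b₀ b₁ hna hnb
      (fun x h0 h1 => by simp [jz1 x h0 h1])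
      (fun x h0 h1 => by simp [jz2 x h0 h1]),
      j00, j01, j10, j11]
  refine ⟨u, humem, fun hwv => by rw [hu, hrdef, hwv]; ring, ?_⟩
  show shannon _ + shannon _ - shannon _ = _
  rw [hSA, hSB, hSJ]
  ring
lemma trace_depol_one (γ : ℝ) (ρ : Matrix (Fin 2 × Fin 2) (Fin 2 × Fin 2) ℂ)
    (hρ : ρ = bellState ∨ ρ = sigma2) : (depol2 γ ρ).trace = 1 := by
  have hρtr : ρ.trace = 1 := by
    rcases hρ with h | h
    · rw [h]; exact trace_bell
    · rw [h]; exact trace_sigma2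
  rw [depol2, Matrix.trace_add, Matrix.trace_smul, Matrix.trace_smul, Matrix.trace_one, hρtr]
  simp [Fintype.card_prod]
  try ring

lemma miOf_deg_left (γ : ℝ) (ρ : Matrix (Fin 2 × Fin 2) (Fin 2 × Fin 2) ℂ)
    (hρ : ρ = bellState ∨ ρ = sigma2)
    {ιA ιB : Type} (P : PVM ιA (Fin 2)) (Q : PVM ιB (Fin 2)) (a : ιA)
    (ha : P.proj a = 1) (hz : ∀ b, b ≠ a → P.proj b = 0) :
    miOf P Q (depol2 γ ρ) = 0 := by
  letI := P.fintype
  letI := Q.fintype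
  have htr := trace_depol_one γ ρ hρ
  have hjz : ∀ x : ιA × ιB, x.1 ≠ a → jointProb P Q (depol2 γ ρ) x = 0 := by
    intro x hx
    simp [jointProb, hz x.1 hx]
  have hmA : (∑ b, jointProb P Q (depol2 γ ρ) (a, b)) = 1 := by
    have hk : ∑ b, ((P.proj a ⊗ₖ Q.proj b) * depol2 γ ρ)
        = (P.proj a ⊗ₖ (1 : Matrix (Fin 2) (Fin 2) ℂ)) * depol2 γ ρ := by
      rw [← Finset.sum_mul]
      congr 1
      rw [← Q.complete]
      ext x y
      simp [Matrix.sum_apply, Matrix.kroneckerMap_apply, Finset.mul_sum]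
    calc ∑ b, jointProb P Q (depol2 γ ρ) (a, b)
        = (∑ b, ((P.proj a ⊗ₖ Q.proj b) * depol2 γ ρ).trace).re := by
          simp only [jointProb]
          exact (Complex.re_sum _ _).symm
      _ = ((P.proj a ⊗ₖ (1 : Matrix (Fin 2) (Fin 2) ℂ)) * depol2 γ ρ).trace.re := by
          rw [← Matrix.trace_sum, hk]
      _ = 1 := by
          rw [ha, Matrix.one_kronecker_one, one_mul, htr, Complex.one_re]
  have hmA' : ∀ b, (∑ x, jointProb P Q (depol2 γ ρ) (x, b)) = jointProb P Q (depol2 γ ρ) (a, b) :=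
    fun b => Finset.sum_eq_single a (fun x _ hx => hjz (x, b) hx)
      (fun h => absurd (Finset.mem_univ a) h)
  have hSA : shannon (fun x : ιA => ∑ b, jointProb P Q (depol2 γ ρ) (x, b)) = 0 := by
    rw [shannon]
    rw [Finset.sum_eq_zero, neg_zero]
    intro x _
    by_cases hx : x = a
    · subst hx
      rw [hmA, Real.logb_one, mul_zero]
    · rw [Finset.sum_eq_zero (fun b _ => hjz (x, b) hx), zero_mul]
  have hJB : shannon (jointProb P Q (depol2 γ ρ))
      = shannon (fun b : ιB => ∑ x, jointProb P Q (depol2 γ ρ) (x, b)) := by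
    rw [shannon, shannon]
    congr 1
    rw [Fintype.sum_prod_type]
    rw [Finset.sum_eq_single a (fun x _ hx => Finset.sum_eq_zero
      (fun b _ => by rw [hjz (x, b) hx, zero_mul]))
      (fun h => absurd (Finset.mem_univ a) h)]
    exact Finset.sum_congr rfl (fun b _ => by rw [hmA' b])
  show shannon _ + shannon _ - shannon _ = 0
  rw [hSA, hJB]
  ring

lemma miOf_deg_right (γ : ℝ) (ρ : Matrix (Fin 2 × Fin 2) (Fin 2 × Fin 2) ℂ)
    (hρ : ρ = bellState ∨ ρ = sigma2)
    {ιA ιB : Type} (P : PVM ιA (Fin 2)) (Q : PVM ιB (Fin 2)) (b : ιB)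
    (hb : Q.proj b = 1) (hz : ∀ c, c ≠ b → Q.proj c = 0) :
    miOf P Q (depol2 γ ρ) = 0 := by
  letI := P.fintype
  letI := Q.fintype
  have htr := trace_depol_one γ ρ hρ
  have hjz : ∀ x : ιA × ιB, x.2 ≠ b → jointProb P Q (depol2 γ ρ) x = 0 := by
    intro x hx
    simp [jointProb, hz x.2 hx]
  have hmB : (∑ x, jointProb P Q (depol2 γ ρ) (x, b)) = 1 := by
    have hk : ∑ x, ((P.proj x ⊗ₖ Q.proj b) * depol2 γ ρ)
        = ((1 : Matrix (Fin 2) (Fin 2) ℂ) ⊗ₖ Q.proj b) * depol2 γ ρ := by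
      rw [← Finset.sum_mul]
      congr 1
      rw [← P.complete]
      ext x y
      simp [Matrix.sum_apply, Matrix.kroneckerMap_apply, Finset.sum_mul]
    calc ∑ x, jointProb P Q (depol2 γ ρ) (x, b)
        = (∑ x, ((P.proj x ⊗ₖ Q.proj b) * depol2 γ ρ).trace).re := by
          simp only [jointProb]
          exact (Complex.re_sum _ _).symm
      _ = (((1 : Matrix (Fin 2) (Fin 2) ℂ) ⊗ₖ Q.proj b) * depol2 γ ρ).trace.re := by
          rw [← Matrix.trace_sum, hk]
      _ = 1 := by
          rw [hb, Matrix.one_kronecker_one, one_mul, htr, Complex.one_re]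
  have hmB' : ∀ x, (∑ c, jointProb P Q (depol2 γ ρ) (x, c)) = jointProb P Q (depol2 γ ρ) (x, b) :=
    fun x => Finset.sum_eq_single b (fun c _ hc => hjz (x, c) hc)
      (fun h => absurd (Finset.mem_univ b) h)
  have hSB : shannon (fun c : ιB => ∑ x, jointProb P Q (depol2 γ ρ) (x, c)) = 0 := by
    rw [shannon]
    rw [Finset.sum_eq_zero, neg_zero]
    intro c _
    by_cases hc : c = b
    · subst hc
      rw [hmB, Real.logb_one, mul_zero]
    · rw [Finset.sum_eq_zero (fun x _ => hjz (x, c) hc), zero_mul]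
  have hJA : shannon (jointProb P Q (depol2 γ ρ))
      = shannon (fun x : ιA => ∑ c, jointProb P Q (depol2 γ ρ) (x, c)) := by
    rw [shannon, shannon]
    congr 1
    rw [Fintype.sum_prod_type]
    refine Finset.sum_congr rfl (fun x _ => ?_)
    rw [Finset.sum_eq_single b (fun c _ hc => by rw [hjz (x, c) hc, zero_mul])
      (fun h => absurd (Finset.mem_univ b) h), hmB' x]
  show shannon _ + shannon _ - shannon _ = 0
  rw [hSB, hJA]
  ring
def gfun (x : ℝ) : ℝ := x * Real.log x + (1/2 - x) * Real.log (1/2 - x)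

lemma gfun_symm (x : ℝ) : gfun (1/2 - x) = gfun x := by
  rw [gfun, gfun, show (1:ℝ)/2 - (1/2 - x) = x by ring]
  ring

lemma gfun_convex : ConvexOn ℝ (Set.Icc (0:ℝ) (1/2)) gfun := by
  have h1 : ConvexOn ℝ (Set.Icc (0:ℝ) (1/2)) (fun x : ℝ => x * Real.log x) :=
    Real.convexOn_mul_log.subset (fun x hx => hx.1) (convex_Icc _ _)
  have h2 : ConvexOn ℝ (Set.Icc (0:ℝ) (1/2))
      (fun x : ℝ => (1/2 - x) * Real.log (1/2 - x)) := by
    constructor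
    · exact convex_Icc _ _
    · intro x hx y hy α β hα hβ hab
      have hx' : (1/2 - x) ∈ Set.Ici (0:ℝ) := by
        simp only [Set.mem_Ici]; linarith [hx.2]
      have hy' : (1/2 - y) ∈ Set.Ici (0:ℝ) := by
        simp only [Set.mem_Ici]; linarith [hy.2]
      have hcv := Real.convexOn_mul_log.2 hx' hy' hα hβ hab
      simp only [smul_eq_mul] at hcv ⊢
      have harg : (1/2 - (α * x + β * y)) = α * (1/2 - x) + β * (1/2 - y) := by
        linear_combination (-1/2) * hab
      rw [harg]
      exact hcv
  exact h1.add h2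

lemma gfun_le (a u : ℝ) (ha : 0 ≤ a) (ha2 : a ≤ 1/4) (hu : u ∈ Set.Icc a (1/2 - a)) :
    gfun u ≤ gfun (1/2 - a) := by
  have hmem_a : a ∈ Set.Icc (0:ℝ) (1/2) := ⟨ha, by linarith⟩
  have hmem_b : (1/2 - a) ∈ Set.Icc (0:ℝ) (1/2) := ⟨by linarith, by linarith⟩
  have hseg : u ∈ segment ℝ a (1/2 - a) := by
    rw [segment_eq_Icc (by linarith : a ≤ 1/2 - a)]
    exact hu
  have h := gfun_convex.le_on_segment hmem_a hmem_b hseg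
  rw [← gfun_symm a, sup_idem] at h
  exact h

lemma gfun_ge (u : ℝ) (hu : u ∈ Set.Icc (0:ℝ) (1/2)) : -Real.log 2 ≤ gfun u := by
  have hmem_u : u ∈ Set.Icc (0:ℝ) (1/2) := hu
  have hmem_u' : (1/2 - u) ∈ Set.Icc (0:ℝ) (1/2) := ⟨by linarith [hu.2], by linarith [hu.1]⟩
  have h := gfun_convex.2 hmem_u hmem_u' (by norm_num : (0:ℝ) ≤ 1/2)
    (by norm_num : (0:ℝ) ≤ 1/2) (by norm_num)
  simp only [smul_eq_mul] at h
  rw [show (1:ℝ)/2 * u + 1/2 * (1/2 - u) = 1/4 by ring, gfun_symm] at h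
  have hval : gfun (1/4) = -Real.log 2 := by
    rw [gfun, show (1:ℝ)/2 - 1/4 = 1/4 by norm_num,
      show (1:ℝ)/4 = 2⁻¹ * 2⁻¹ by norm_num,
      Real.log_mul (by norm_num) (by norm_num), Real.log_inv]
    ring
  linarith [h, hval.symm.le]

lemma f_as_g (x : ℝ) :
    x * Real.logb 2 x + (1/2 - x) * Real.logb 2 (1/2 - x) = gfun x / Real.log 2 := by
  rw [Real.logb, Real.logb, gfun]
  ring

lemma main_ineq (γ u : ℝ) (hγ0 : 0 ≤ γ) (hγ1 : γ < 1)
    (hu : u ∈ Set.Icc (γ/4) (1/2 - γ/4)) :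
    2 + 2*(u * Real.logb 2 u + (1/2 - u) * Real.logb 2 (1/2 - u))
      ≤ 2 + 2*((1/2 - γ/4) * Real.logb 2 (1/2 - γ/4)
          + (1/2 - (1/2 - γ/4)) * Real.logb 2 (1/2 - (1/2 - γ/4))) := by
  rw [f_as_g, f_as_g]
  have hlog2 : 0 < Real.log 2 := Real.log_pos one_lt_two
  have hg := gfun_le (γ/4) u (by linarith) (by linarith) hu
  have := (div_le_div_iff_of_pos_right hlog2).mpr hg
  linarith

lemma main_nonneg (γ : ℝ) (hγ0 : 0 ≤ γ) (hγ1 : γ < 1) :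
    0 ≤ 2 + 2*((1/2 - γ/4) * Real.logb 2 (1/2 - γ/4)
        + (1/2 - (1/2 - γ/4)) * Real.logb 2 (1/2 - (1/2 - γ/4))) := by
  rw [f_as_g]
  have hlog2 : 0 < Real.log 2 := Real.log_pos one_lt_two
  have hg := gfun_ge (1/2 - γ/4) ⟨by linarith, by linarith⟩
  have h2 := (div_le_div_iff_of_pos_right hlog2).mpr hg
  rw [neg_div, div_self (ne_of_gt hlog2)] at h2
  linarith

lemma comp_R1 : IsR1 ((compPVM (Fin 2)).proj 0) 1 0 := by
  refine ⟨?_, ?_, ?_, ?_, ?_, zero_le_one, le_refl 1⟩ <;>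
    simp [compPVM, Matrix.diagonal_apply]

lemma comp_sub : (compPVM (Fin 2)).proj 1 = 1 - (compPVM (Fin 2)).proj 0 := by
  ext i j
  fin_cases i <;> fin_cases j <;>
    simp [compPVM, Matrix.diagonal_apply, Matrix.one_apply]

lemma comp_z : ∀ b : Fin 2, b ≠ 0 → b ≠ 1 → (compPVM (Fin 2)).proj b = 0 := by
  intro b h0 h1
  fin_cases b
  · exact absurd rfl h0
  · exact absurd rfl h1

/-- for the two-qubit depolarized Bell state or depolarized shared
random bit with strength `γ ∈ [0,1)`, among all product PVM measurements the
computational-basis measurement on both qubits maximizes the mutual information of the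
outcome distribution. -/
theorem computational_basis_maximizes_mutual_information
    (γ : ℝ) (hγ : γ ∈ Set.Ico (0 : ℝ) 1)
    (ρ : Matrix (Fin 2 × Fin 2) (Fin 2 × Fin 2) ℂ)
    (hρ : ρ = bellState ∨ ρ = sigma2)
    (ιA ιB : Type) (P : PVM ιA (Fin 2)) (Q : PVM ιB (Fin 2)) :
    miOf P Q (depol2 γ ρ) ≤ miOf (compPVM (Fin 2)) (compPVM (Fin 2)) (depol2 γ ρ) := by
  obtain ⟨hγ0, hγ1⟩ := hγ
  obtain ⟨uc, hucmem, hucval, hcform⟩ := miOf_nondeg γ hγ0 hγ1 ρ hρ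
    (compPVM (Fin 2)) (compPVM (Fin 2)) 0 1 0 1 1 1 0 0
    (by decide) (by decide) comp_R1 comp_sub comp_z comp_R1 comp_sub comp_z
  have huc : uc = 1/2 - γ/4 := by
    rw [hucval (by simp)]
    ring
  rw [hcform, huc]
  rcases pvm_classify P with ⟨a, ha1, haz⟩ | ⟨a₀, a₁, p, w, hna, hA, hA1, hAz⟩
  · rw [miOf_deg_left γ ρ hρ P Q a ha1 haz]
    exact main_nonneg γ hγ0 hγ1
  · rcases pvm_classify Q with ⟨b, hb1, hbz⟩ | ⟨b₀, b₁, q, v, hnb, hB, hB1, hBz⟩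
    · rw [miOf_deg_right γ ρ hρ P Q b hb1 hbz]
      exact main_nonneg γ hγ0 hγ1
    · obtain ⟨u, humem, _, hform⟩ := miOf_nondeg γ hγ0 hγ1 ρ hρ P Q
        a₀ a₁ b₀ b₁ p q w v hna hnb hA hA1 hAz hB hB1 hBz
      rw [hform]
      exact main_ineq γ u hγ0 hγ1 humem

end
end

section
/- Let ρ be a density matrix on two qubits with single-qubit marginals ρ₁ = tr₂(ρ) and ρ₂ = tr₁(ρ). Then the measured mutual information of ρ is zero — i.e., for every pair of single-qubit PVMs {Π^{(1)}_a}, {Π^{(2)}_b} the outcome distribution P(a,b) = tr((Π^{(1)}_a ⊗ Π^{(2)}_b) ρ) satisfies H(P₁)+H(P₂)−H(P) = 0 — if and only if ρ = ρ₁ ⊗ ρ₂. Consequently, if I_m(ρ) > 0 then the two qubits are correlated by a common source; this is the key step showing that the qubit characteristic matrix of a noisy network with product source states ρ = ⊗_i ρ^{Λ_i} completely characterizes the network topology. -/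
open scoped Kronecker Matrix Classical ComplexOrder

noncomputable section

/-- Partial trace over the second tensor factor. -/
def ptraceR {dA dB : Type*} [Fintype dB] (ρ : Matrix (dA × dB) (dA × dB) ℂ) :
    Matrix dA dA ℂ :=
  Matrix.of fun a a' => ∑ b, ρ (a, b) (a', b)

/-- Partial trace over the first tensor factor. -/
def ptraceL {dA dB : Type*} [Fintype dA] (ρ : Matrix (dA × dB) (dA × dB) ℂ) :
    Matrix dB dB ℂ :=
  Matrix.of fun b b' => ∑ a, ρ (a, b) (a, b')

lemma gibbs_eq {ι : Type*} [Fintype ι] (p q : ι → ℝ) (hp : ∀ x, 0 ≤ p x)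
    (hq : ∀ x, 0 ≤ q x) (hsum : ∑ x, p x = ∑ x, q x)
    (habs : ∀ x, q x = 0 → p x = 0)
    (heq : ∑ x, p x * Real.log (q x) = ∑ x, p x * Real.log (p x)) :
    ∀ x, p x = q x := by
  by_contra hcon
  push_neg at hcon
  obtain ⟨x0, hx0⟩ := hcon
  have key : ∀ x : ι, p x ≠ q x →
      p x * Real.log (q x) - p x * Real.log (p x) < q x - p x := by
    intro x hne
    rcases eq_or_lt_of_le (hp x) with h0 | hpos
    · have hq0 : 0 < q x := lt_of_le_of_ne (hq x) (by
        intro h; exact hne (by rw [← h0, ← h]))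
      simp [← h0, hq0]
    · have hqne : q x ≠ 0 := fun h => absurd hpos (by simp [habs x h])
      have hq0 : 0 < q x := lt_of_le_of_ne (hq x) (Ne.symm hqne)
      have hratio : q x / p x ≠ 1 := by
        intro h
        rw [div_eq_one_iff_eq hpos.ne'] at h
        exact hne h.symm
      have hlt := Real.log_lt_sub_one_of_pos (div_pos hq0 hpos) hratio
      rw [Real.log_div hq0.ne' hpos.ne'] at hlt
      have h2 := mul_lt_mul_of_pos_left hlt hpos
      have h3 : p x * (q x / p x - 1) = q x - p x := by field_simp
      rw [h3, mul_sub] at h2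
      exact h2
  have wkey : ∀ x ∈ Finset.univ, p x * Real.log (q x) - p x * Real.log (p x) ≤ q x - p x := by
    intro x _
    by_cases hne : p x = q x
    · simp [hne]
    · exact (key x hne).le
  have hlt2 := Finset.sum_lt_sum wkey ⟨x0, Finset.mem_univ x0, key x0 hx0⟩
  rw [Finset.sum_sub_distrib, Finset.sum_sub_distrib, heq] at hlt2
  linarith

lemma mi_zero_prod {ιA ιB : Type*} [Fintype ιA] [Fintype ιB] (p : ιA × ιB → ℝ)
    (hp : ∀ x, 0 ≤ p x) (hsum : ∑ x, p x = 1)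
    (h : shannon (fun a => ∑ b, p (a, b)) + shannon (fun b => ∑ a, p (a, b)) - shannon p = 0) :
    ∀ x : ιA × ιB, p x = (∑ b, p (x.1, b)) * (∑ a, p (a, x.2)) := by
  set m1 : ιA → ℝ := fun a => ∑ b, p (a, b) with hm1
  set m2 : ιB → ℝ := fun b => ∑ a, p (a, b) with hm2
  have hm1nn : ∀ a, 0 ≤ m1 a := fun a => Finset.sum_nonneg fun b _ => hp _
  have hm2nn : ∀ b, 0 ≤ m2 b := fun b => Finset.sum_nonneg fun a _ => hp _
  have hple1 : ∀ a b, p (a, b) ≤ m1 a := fun a b =>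
    Finset.single_le_sum (f := fun b => p (a, b)) (fun b _ => hp _) (Finset.mem_univ b)
  have hple2 : ∀ a b, p (a, b) ≤ m2 b := fun a b =>
    Finset.single_le_sum (f := fun a => p (a, b)) (fun a _ => hp _) (Finset.mem_univ a)
  have hsm1 : ∑ a, m1 a = 1 := by rw [← hsum, Fintype.sum_prod_type]
  have hsm2 : ∑ b, m2 b = 1 := by rw [← hsum, Fintype.sum_prod_type_right]
  have hsumq : ∑ x : ιA × ιB, m1 x.1 * m2 x.2 = ∑ x, p x := by
    rw [hsum, Fintype.sum_prod_type]
    simp only [← Finset.mul_sum, hsm2, mul_one, hsm1]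
  have habs : ∀ x : ιA × ιB, m1 x.1 * m2 x.2 = 0 → p x = 0 := by
    rintro ⟨a, b⟩ hx
    rcases mul_eq_zero.mp hx with h0 | h0
    · exact le_antisymm (h0 ▸ hple1 a b) (hp _)
    · exact le_antisymm (h0 ▸ hple2 a b) (hp _)
  have hsplit : ∀ x : ιA × ιB, p x * Real.log (m1 x.1 * m2 x.2)
      = p x * Real.log (m1 x.1) + p x * Real.log (m2 x.2) := by
    rintro ⟨a, b⟩
    rcases eq_or_lt_of_le (hp (a, b)) with h0 | hpos
    · simp [← h0]
    · have h1 : m1 a ≠ 0 := fun hh => by nlinarith [hple1 a b]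
      have h2 : m2 b ≠ 0 := fun hh => by nlinarith [hple2 a b]
      rw [Real.log_mul h1 h2, mul_add]
  have e1 : ∑ x : ιA × ιB, p x * Real.log (m1 x.1) = ∑ a, m1 a * Real.log (m1 a) := by
    rw [Fintype.sum_prod_type]
    refine Finset.sum_congr rfl fun a _ => ?_
    dsimp only
    rw [← Finset.sum_mul]
  have e2 : ∑ x : ιA × ιB, p x * Real.log (m2 x.2) = ∑ b, m2 b * Real.log (m2 b) := by
    rw [Fintype.sum_prod_type_right]
    refine Finset.sum_congr rfl fun b _ => ?_
    dsimp only
    rw [← Finset.sum_mul]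
  have hlog2 : Real.log 2 ≠ 0 := (Real.log_pos one_lt_two).ne'
  have h' : ∑ a, m1 a * Real.log (m1 a) + ∑ b, m2 b * Real.log (m2 b)
      = ∑ x, p x * Real.log (p x) := by
    simp only [shannon, Real.logb, ← mul_div_assoc, ← Finset.sum_div, ← neg_div, ← sub_div,
      ← add_div] at h
    rw [div_eq_zero_iff] at h
    rcases h with h | h
    · linarith
    · exact absurd h hlog2
  have heq : ∑ x : ιA × ιB, p x * Real.log (m1 x.1 * m2 x.2)
      = ∑ x, p x * Real.log (p x) := by
    rw [Finset.sum_congr rfl fun x _ => hsplit x, Finset.sum_add_distrib, e1, e2, h']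
  exact gibbs_eq p (fun x => m1 x.1 * m2 x.2) hp
    (fun x => mul_nonneg (hm1nn _) (hm2nn _)) hsumq.symm habs heq

lemma shannon_prod {ιA ιB : Type*} [Fintype ιA] [Fintype ιB] (f : ιA → ℝ) (g : ιB → ℝ)
    (hf : ∑ a, f a = 1) (hg : ∑ b, g b = 1) :
    shannon (fun x : ιA × ιB => f x.1 * g x.2) = shannon f + shannon g := by
  have hsplit : ∀ x : ιA × ιB, f x.1 * g x.2 * Real.logb 2 (f x.1 * g x.2)
      = f x.1 * g x.2 * Real.logb 2 (f x.1) + f x.1 * g x.2 * Real.logb 2 (g x.2) := by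
    rintro ⟨a, b⟩
    by_cases h1 : f a = 0
    · simp [h1]
    · by_cases h2 : g b = 0
      · simp [h2]
      · rw [Real.logb_mul h1 h2, mul_add]
  simp only [shannon]
  rw [Finset.sum_congr rfl fun x _ => hsplit x, Finset.sum_add_distrib]
  have e1 : ∑ x : ιA × ιB, f x.1 * g x.2 * Real.logb 2 (f x.1)
      = ∑ a, f a * Real.logb 2 (f a) := by
    rw [Fintype.sum_prod_type]
    refine Finset.sum_congr rfl fun a _ => ?_
    dsimp only
    calc ∑ y, f a * g y * Real.logb 2 (f a)
        = (∑ y, g y) * (f a * Real.logb 2 (f a)) := by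
          rw [Finset.sum_mul]; exact Finset.sum_congr rfl fun y _ => by ring
      _ = f a * Real.logb 2 (f a) := by rw [hg, one_mul]
  have e2 : ∑ x : ιA × ιB, f x.1 * g x.2 * Real.logb 2 (g x.2)
      = ∑ b, g b * Real.logb 2 (g b) := by
    rw [Fintype.sum_prod_type_right]
    refine Finset.sum_congr rfl fun b _ => ?_
    dsimp only
    calc ∑ x, f x * g b * Real.logb 2 (g b)
        = (∑ x, f x) * (g b * Real.logb 2 (g b)) := by
          rw [Finset.sum_mul]; exact Finset.sum_congr rfl fun x _ => by ring
      _ = g b * Real.logb 2 (g b) := by rw [hf, one_mul]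
  rw [e1, e2]
  ring

section QuantumLemmas

variable {d dA dB : Type*} [Fintype d] [DecidableEq d] [Fintype dA] [DecidableEq dA]
  [Fintype dB] [DecidableEq dB]

lemma kron_conjTranspose (A : Matrix dA dA ℂ) (B : Matrix dB dB ℂ) :
    (A ⊗ₖ B)ᴴ = Aᴴ ⊗ₖ Bᴴ := by
  ext ⟨i, j⟩ ⟨k, l⟩
  simp [Matrix.conjTranspose_apply, Matrix.kroneckerMap_apply, mul_comm]

lemma kron_isHermitian {A : Matrix dA dA ℂ} {B : Matrix dB dB ℂ}
    (hA : A.IsHermitian) (hB : B.IsHermitian) : (A ⊗ₖ B).IsHermitian := by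
  unfold Matrix.IsHermitian
  rw [kron_conjTranspose, hA.eq, hB.eq]

lemma trace_real {A ρ : Matrix d d ℂ} (hA : A.IsHermitian) (hρ : ρ.IsHermitian) :
    (A * ρ).trace = (((A * ρ).trace).re : ℂ) := by
  have h : (starRingEnd ℂ) ((A * ρ).trace) = (A * ρ).trace := by
    rw [← Complex.star_def, ← Matrix.trace_conjTranspose, Matrix.conjTranspose_mul,
      hA.eq, hρ.eq, Matrix.trace_mul_comm]
  exact (Complex.conj_eq_iff_re.mp h).symm

lemma psd_trace_re_nonneg {M : Matrix d d ℂ} (hM : M.PosSemidef) : 0 ≤ M.trace.re := by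
  have h : ∀ i, 0 ≤ (M i i).re := by
    intro i
    have h2 : (0 : ℂ) ≤ M i i := by
      simpa [dotProduct, Pi.single_apply] using hM.dotProduct_mulVec_nonneg (Pi.single i 1)
    exact (Complex.nonneg_iff.mp h2).1
  rw [Matrix.trace, Complex.re_sum]
  exact Finset.sum_nonneg fun i _ => h i

lemma proj_trace_re_nonneg {P : Matrix d d ℂ} {ρ : Matrix d d ℂ}
    (hh : P.IsHermitian) (hi : P * P = P) (hρ : ρ.PosSemidef) :
    0 ≤ ((P * ρ).trace).re := by
  have h1 : (P * ρ * Pᴴ).trace = (P * ρ).trace := by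
    rw [Matrix.trace_mul_cycle, hh.eq, hi]
  have := psd_trace_re_nonneg (hρ.mul_mul_conjTranspose_same P)
  rwa [h1] at this

/-- The two-outcome PVM `{Π, 1 - Π}` associated to a projection. -/
def projPVM (P : Matrix d d ℂ) (hh : P.IsHermitian) (hi : P * P = P) : PVM (Fin 2) d where
  fintype := inferInstance
  proj := ![P, 1 - P]
  herm := by
    intro a
    fin_cases a
    · exact hh
    · show (1 - P).IsHermitian
      unfold Matrix.IsHermitian
      rw [Matrix.conjTranspose_sub, Matrix.conjTranspose_one, hh.eq]
  idem := by
    intro a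
    fin_cases a
    · exact hi
    · show (1 - P) * (1 - P) = 1 - P
      rw [sub_mul, one_mul, mul_sub, mul_one, hi]
      abel
  orthogonal := by
    intro a b hab
    fin_cases a <;> fin_cases b <;> first
      | exact absurd rfl hab
      | (show P * (1 - P) = 0; rw [mul_sub, mul_one, hi]; abel)
      | (show (1 - P) * P = 0; rw [sub_mul, one_mul, hi]; abel)
  complete := by
    rw [Fin.sum_univ_two]
    show P + (1 - P) = 1
    abel

lemma sum_kron {ιA ιB : Type*} [Fintype ιA] [Fintype ιB]
    (f : ιA → Matrix dA dA ℂ) (g : ιB → Matrix dB dB ℂ) :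
    ∑ a, ∑ b, f a ⊗ₖ g b = (∑ a, f a) ⊗ₖ (∑ b, g b) := by
  ext ⟨i, j⟩ ⟨k, l⟩
  simp [Matrix.sum_apply, Matrix.kroneckerMap_apply, Finset.sum_mul_sum,
    Fintype.sum_prod_type]

end QuantumLemmas

section Core

lemma core {ρ : Matrix (Fin 2 × Fin 2) (Fin 2 × Fin 2) ℂ} (hρ : ρ.PosSemidef)
    (htr : ρ.trace = 1)
    (h : ∀ (ιA ιB : Type) (P : PVM ιA (Fin 2)) (Q : PVM ιB (Fin 2)), miOf P Q ρ = 0)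
    (A B : Matrix (Fin 2) (Fin 2) ℂ) (hAh : A.IsHermitian) (hAi : A * A = A)
    (hBh : B.IsHermitian) (hBi : B * B = B) :
    ((A ⊗ₖ B) * ρ).trace
      = ((A ⊗ₖ (1 : Matrix (Fin 2) (Fin 2) ℂ)) * ρ).trace *
        (((1 : Matrix (Fin 2) (Fin 2) ℂ) ⊗ₖ B) * ρ).trace := by
  set P := projPVM A hAh hAi with hP
  set Q := projPVM B hBh hBi with hQ
  have hp : ∀ x, 0 ≤ jointProb P Q ρ x := by
    rintro ⟨a, b⟩
    exact proj_trace_re_nonneg (kron_isHermitian (P.herm a) (Q.herm b))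
      (by rw [← Matrix.mul_kronecker_mul, P.idem, Q.idem]) hρ
  have hsum : ∑ x, jointProb P Q ρ x = 1 := by
    have h1 : ∑ x : Fin 2 × Fin 2, ((P.proj x.1 ⊗ₖ Q.proj x.2) * ρ).trace = 1 := by
      rw [← Matrix.trace_sum, ← Finset.sum_mul, Fintype.sum_prod_type, sum_kron,
        (show ∑ a : Fin 2, P.proj a = 1 from P.complete),
        (show ∑ b : Fin 2, Q.proj b = 1 from Q.complete), Matrix.one_kronecker_one, Matrix.one_mul, htr]
    have h2 : ∑ x : Fin 2 × Fin 2, jointProb P Q ρ x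
        = (∑ x : Fin 2 × Fin 2, ((P.proj x.1 ⊗ₖ Q.proj x.2) * ρ).trace).re := by
      rw [Complex.re_sum]; rfl
    rw [h2, h1]; rfl
  have hmi := h (Fin 2) (Fin 2) P Q
  have hprod := mi_zero_prod (jointProb P Q ρ) hp hsum hmi (0, 0)
  -- identify the pieces
  have hproj0 : P.proj 0 = A := rfl
  have hqroj0 : Q.proj 0 = B := rfl
  have hproj1 : P.proj 1 = 1 - A := rfl
  have hqroj1 : Q.proj 1 = 1 - B := rfl
  have hbsum : ∑ b, jointProb P Q ρ (0, b) = (((A ⊗ₖ 1) * ρ).trace).re := by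
    show ∑ b : Fin 2, (((P.proj 0 ⊗ₖ Q.proj b) * ρ).trace).re = _
    rw [Fin.sum_univ_two, ← Complex.add_re, ← Matrix.trace_add, ← Matrix.add_mul,
      ← Matrix.kronecker_add, hproj0, hqroj0, hqroj1]
    norm_num
  have hasum : ∑ a, jointProb P Q ρ (a, 0) = ((((1 : Matrix (Fin 2) (Fin 2) ℂ) ⊗ₖ B) * ρ).trace).re := by
    show ∑ a : Fin 2, (((P.proj a ⊗ₖ Q.proj 0) * ρ).trace).re = _
    rw [Fin.sum_univ_two, ← Complex.add_re, ← Matrix.trace_add, ← Matrix.add_mul,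
      ← Matrix.add_kronecker, hproj0, hproj1, hqroj0]
    norm_num
  have hmain : ((((A ⊗ₖ B) * ρ).trace).re : ℝ)
      = (((A ⊗ₖ 1) * ρ).trace).re * ((((1 : Matrix (Fin 2) (Fin 2) ℂ) ⊗ₖ B) * ρ).trace).re := by
    rw [← hbsum, ← hasum]
    exact hprod
  have r1 := trace_real (kron_isHermitian hAh hBh) hρ.1
  have r2 := trace_real (kron_isHermitian hAh Matrix.isHermitian_one) hρ.1
  have r3 := trace_real (kron_isHermitian Matrix.isHermitian_one hBh) hρ.1
  rw [r1, r2, r3, ← Complex.ofReal_mul, hmain]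

end Core

section Basis

def q0 : Matrix (Fin 2) (Fin 2) ℂ := !![1, 0; 0, 0]
def q1 : Matrix (Fin 2) (Fin 2) ℂ := !![0, 0; 0, 1]
def qp : Matrix (Fin 2) (Fin 2) ℂ := !![1/2, 1/2; 1/2, 1/2]
def qi : Matrix (Fin 2) (Fin 2) ℂ := !![1/2, -Complex.I/2; Complex.I/2, 1/2]

lemma q0_herm : q0.IsHermitian := by
  ext i j; fin_cases i <;> fin_cases j <;>
    simp [q0, Matrix.conjTranspose_apply]
lemma q1_herm : q1.IsHermitian := by
  ext i j; fin_cases i <;> fin_cases j <;>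
    simp [q1, Matrix.conjTranspose_apply]
lemma qp_herm : qp.IsHermitian := by
  ext i j; fin_cases i <;> fin_cases j <;>
    simp [qp, Matrix.conjTranspose_apply, Complex.ext_iff] <;> norm_num
lemma qi_herm : qi.IsHermitian := by
  ext i j; fin_cases i <;> fin_cases j <;>
    simp [qi, Matrix.conjTranspose_apply, Complex.ext_iff] <;> norm_num

lemma q0_idem : q0 * q0 = q0 := by
  ext i j; fin_cases i <;> fin_cases j <;>
    simp [q0, Matrix.mul_apply, Fin.sum_univ_two]
lemma q1_idem : q1 * q1 = q1 := by
  ext i j; fin_cases i <;> fin_cases j <;>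
    simp [q1, Matrix.mul_apply, Fin.sum_univ_two]
lemma qp_idem : qp * qp = qp := by
  ext i j; fin_cases i <;> fin_cases j <;>
    simp [qp, Matrix.mul_apply, Fin.sum_univ_two] <;> norm_num
lemma qi_idem : qi * qi = qi := by
  ext i j; fin_cases i <;> fin_cases j <;>
    simp [qi, Matrix.mul_apply, Fin.sum_univ_two, Complex.ext_iff] <;> norm_num

lemma unit00 : Matrix.single (0 : Fin 2) (0 : Fin 2) (1 : ℂ) = q0 := by
  ext i j; fin_cases i <;> fin_cases j <;> simp [q0, Matrix.single]
lemma unit11 : Matrix.single (1 : Fin 2) (1 : Fin 2) (1 : ℂ) = q1 := by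
  ext i j; fin_cases i <;> fin_cases j <;> simp [q1, Matrix.single]
lemma unit01 : Matrix.single (0 : Fin 2) (1 : Fin 2) (1 : ℂ)
    = qp + Complex.I • qi - ((1 + Complex.I)/2) • q0 - ((1 + Complex.I)/2) • q1 := by
  ext i j; fin_cases i <;> fin_cases j <;>
    simp [q0, q1, qp, qi, Matrix.single, Complex.ext_iff] <;> norm_num
lemma unit10 : Matrix.single (1 : Fin 2) (0 : Fin 2) (1 : ℂ)
    = qp - Complex.I • qi - ((1 - Complex.I)/2) • q0 - ((1 - Complex.I)/2) • q1 := by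
  ext i j; fin_cases i <;> fin_cases j <;>
    simp [q0, q1, qp, qi, Matrix.single, Complex.ext_iff] <;> norm_num

lemma g_units (g : Matrix (Fin 2) (Fin 2) ℂ → ℂ)
    (hadd : ∀ X Y, g (X + Y) = g X + g Y)
    (hsmul : ∀ (c : ℂ) X, g (c • X) = c * g X)
    (h0 : g q0 = 0) (h1 : g q1 = 0) (hp : g qp = 0) (hi : g qi = 0) :
    ∀ i j : Fin 2, g (Matrix.single i j (1 : ℂ)) = 0 := by
  have hsub : ∀ X Y, g (X - Y) = g X - g Y := by
    intro X Y
    rw [sub_eq_add_neg, hadd, ← neg_one_smul ℂ Y, hsmul]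
    ring
  have h2 : ∀ i : Fin 2, i = 0 ∨ i = 1 := by decide
  intro i j
  rcases h2 i with rfl | rfl <;> rcases h2 j with rfl | rfl
  · rw [unit00, h0]
  · rw [unit01, hsub, hsub, hadd, hsmul, hsmul, hsmul, h0, h1, hp, hi]; ring
  · rw [unit10, hsub, hsub, hsub, hsmul, hsmul, hsmul, h0, h1, hp, hi]; ring
  · rw [unit11, h1]

end Basis

section Assemble

variable {ρ : Matrix (Fin 2 × Fin 2) (Fin 2 × Fin 2) ℂ}

lemma units_factor (hρ : ρ.PosSemidef) (htr : ρ.trace = 1)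
    (h : ∀ (ιA ιB : Type) (P : PVM ιA (Fin 2)) (Q : PVM ιB (Fin 2)), miOf P Q ρ = 0)
    (i j k l : Fin 2) :
    ((Matrix.single i j (1 : ℂ) ⊗ₖ Matrix.single k l (1 : ℂ)) * ρ).trace
      = ((Matrix.single i j (1 : ℂ) ⊗ₖ (1 : Matrix (Fin 2) (Fin 2) ℂ)) * ρ).trace *
        (((1 : Matrix (Fin 2) (Fin 2) ℂ) ⊗ₖ Matrix.single k l (1 : ℂ)) * ρ).trace := by
  have step1 : ∀ (B : Matrix (Fin 2) (Fin 2) ℂ), B.IsHermitian → B * B = B →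
      ∀ i j : Fin 2, ((Matrix.single i j (1 : ℂ) ⊗ₖ B) * ρ).trace
        = ((Matrix.single i j (1 : ℂ) ⊗ₖ (1 : Matrix (Fin 2) (Fin 2) ℂ)) * ρ).trace *
          (((1 : Matrix (Fin 2) (Fin 2) ℂ) ⊗ₖ B) * ρ).trace := by
    intro B hBh hBi i j
    have hg := g_units (fun A => ((A ⊗ₖ B) * ρ).trace -
        ((A ⊗ₖ (1 : Matrix (Fin 2) (Fin 2) ℂ)) * ρ).trace *
        (((1 : Matrix (Fin 2) (Fin 2) ℂ) ⊗ₖ B) * ρ).trace)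
      (by intro X Y
          simp only [Matrix.add_kronecker, Matrix.add_mul, Matrix.trace_add]; ring)
      (by intro c X
          simp only [Matrix.smul_kronecker, Matrix.smul_mul, Matrix.trace_smul, smul_eq_mul]; ring)
      (sub_eq_zero_of_eq (core hρ htr h q0 B q0_herm q0_idem hBh hBi))
      (sub_eq_zero_of_eq (core hρ htr h q1 B q1_herm q1_idem hBh hBi))
      (sub_eq_zero_of_eq (core hρ htr h qp B qp_herm qp_idem hBh hBi))
      (sub_eq_zero_of_eq (core hρ htr h qi B qi_herm qi_idem hBh hBi))
      i j
    exact sub_eq_zero.mp hg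
  have hg := g_units (fun B => ((Matrix.single i j (1 : ℂ) ⊗ₖ B) * ρ).trace -
      ((Matrix.single i j (1 : ℂ) ⊗ₖ (1 : Matrix (Fin 2) (Fin 2) ℂ)) * ρ).trace *
      (((1 : Matrix (Fin 2) (Fin 2) ℂ) ⊗ₖ B) * ρ).trace)
    (by intro X Y
        simp only [Matrix.kronecker_add, Matrix.add_mul, Matrix.trace_add]; ring)
    (by intro c X
        simp only [Matrix.kronecker_smul, Matrix.smul_mul, Matrix.trace_smul, smul_eq_mul]; ring)
    (sub_eq_zero_of_eq (step1 q0 q0_herm q0_idem i j))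
    (sub_eq_zero_of_eq (step1 q1 q1_herm q1_idem i j))
    (sub_eq_zero_of_eq (step1 qp qp_herm qp_idem i j))
    (sub_eq_zero_of_eq (step1 qi qi_herm qi_idem i j))
    k l
  exact sub_eq_zero.mp hg

lemma trace_unit_kron (ρ : Matrix (Fin 2 × Fin 2) (Fin 2 × Fin 2) ℂ) (a a' b b' : Fin 2) :
    ((Matrix.single a' a (1 : ℂ) ⊗ₖ Matrix.single b' b (1 : ℂ)) * ρ).trace
      = ρ (a, b) (a', b') := by
  simp [Matrix.trace, Matrix.diag, Matrix.mul_apply, Matrix.kroneckerMap_apply,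
    Fintype.sum_prod_type, Matrix.single, ite_and, Finset.sum_ite_eq,
    Finset.sum_ite_eq', mul_ite, ite_mul]

lemma trace_unit_left (ρ : Matrix (Fin 2 × Fin 2) (Fin 2 × Fin 2) ℂ) (a a' : Fin 2) :
    ((Matrix.single a' a (1 : ℂ) ⊗ₖ (1 : Matrix (Fin 2) (Fin 2) ℂ)) * ρ).trace
      = ∑ y, ρ (a, y) (a', y) := by
  simp [Matrix.trace, Matrix.diag, Matrix.mul_apply, Matrix.kroneckerMap_apply,
    Fintype.sum_prod_type, Matrix.single, Matrix.one_apply, ite_and,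
    Finset.sum_ite_eq, Finset.sum_ite_eq', mul_ite, ite_mul]

lemma trace_unit_right (ρ : Matrix (Fin 2 × Fin 2) (Fin 2 × Fin 2) ℂ) (b b' : Fin 2) :
    (((1 : Matrix (Fin 2) (Fin 2) ℂ) ⊗ₖ Matrix.single b' b (1 : ℂ)) * ρ).trace
      = ∑ x, ρ (x, b) (x, b') := by
  simp [Matrix.trace, Matrix.diag, Matrix.mul_apply, Matrix.kroneckerMap_apply,
    Fintype.sum_prod_type, Matrix.single, Matrix.one_apply, ite_and,
    Finset.sum_ite_eq, Finset.sum_ite_eq', mul_ite, ite_mul]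

lemma forward_dir (hρ : ρ.PosSemidef) (htr : ρ.trace = 1)
    (h : ∀ (ιA ιB : Type) (P : PVM ιA (Fin 2)) (Q : PVM ιB (Fin 2)), miOf P Q ρ = 0) :
    ρ = ptraceR ρ ⊗ₖ ptraceL ρ := by
  ext ⟨a, b⟩ ⟨a', b'⟩
  have hu := units_factor hρ htr h a' a b' b
  rw [trace_unit_kron, trace_unit_left, trace_unit_right] at hu
  simpa [Matrix.kroneckerMap_apply, ptraceR, ptraceL] using hu

end Assemble

section Backward

variable {ρ : Matrix (Fin 2 × Fin 2) (Fin 2 × Fin 2) ℂ}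

lemma ptraceR_herm (hρ : ρ.IsHermitian) : (ptraceR ρ).IsHermitian := by
  ext a a'
  simp only [Matrix.conjTranspose_apply, ptraceR, Matrix.of_apply, star_sum]
  exact Finset.sum_congr rfl fun b _ =>
    (congrFun (congrFun hρ (a, b)) (a', b) : _)

lemma ptraceL_herm (hρ : ρ.IsHermitian) : (ptraceL ρ).IsHermitian := by
  ext b b'
  simp only [Matrix.conjTranspose_apply, ptraceL, Matrix.of_apply, star_sum]
  exact Finset.sum_congr rfl fun a _ =>
    (congrFun (congrFun hρ (a, b)) (a, b') : _)

lemma ptraceR_trace : (ptraceR ρ).trace = ρ.trace := by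
  simp [ptraceR, Matrix.trace, Matrix.diag, Fintype.sum_prod_type]

lemma ptraceL_trace : (ptraceL ρ).trace = ρ.trace := by
  simp [ptraceL, Matrix.trace, Matrix.diag, Fintype.sum_prod_type_right]

lemma backward_dir (hρ : ρ.PosSemidef) (htr : ρ.trace = 1)
    (hprod : ρ = ptraceR ρ ⊗ₖ ptraceL ρ) :
    ∀ (ιA ιB : Type) (P : PVM ιA (Fin 2)) (Q : PVM ιB (Fin 2)), miOf P Q ρ = 0 := by
  intro ιA ιB P Q
  letI := P.fintype
  letI := Q.fintype
  have hρ1h : (ptraceR ρ).IsHermitian := ptraceR_herm hρ.1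
  have hρ2h : (ptraceL ρ).IsHermitian := ptraceL_herm hρ.1
  set f : ιA → ℝ := fun a => ((P.proj a * ptraceR ρ).trace).re with hf
  set g : ιB → ℝ := fun b => ((Q.proj b * ptraceL ρ).trace).re with hg
  have hkey : jointProb P Q ρ = fun ab => f ab.1 * g ab.2 := by
    funext ab
    show (((P.proj ab.1 ⊗ₖ Q.proj ab.2) * ρ).trace).re = _
    conv_lhs => rw [hprod]
    rw [← Matrix.mul_kronecker_mul, Matrix.trace_kronecker]
    rw [trace_real (P.herm ab.1) hρ1h, trace_real (Q.herm ab.2) hρ2h,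
      ← Complex.ofReal_mul, Complex.ofReal_re]
  have hfs : ∑ a, f a = 1 := by
    have h1 : ∑ a, (P.proj a * ptraceR ρ).trace = 1 := by
      rw [← Matrix.trace_sum, ← Finset.sum_mul, P.complete, Matrix.one_mul,
        ptraceR_trace, htr]
    have h2 : ∑ a, f a = (∑ a, (P.proj a * ptraceR ρ).trace).re := by
      rw [Complex.re_sum]
    rw [h2, h1]; rfl
  have hgs : ∑ b, g b = 1 := by
    have h1 : ∑ b, (Q.proj b * ptraceL ρ).trace = 1 := by
      rw [← Matrix.trace_sum, ← Finset.sum_mul, Q.complete, Matrix.one_mul,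
        ptraceL_trace, htr]
    have h2 : ∑ b, g b = (∑ b, (Q.proj b * ptraceL ρ).trace).re := by
      rw [Complex.re_sum]
    rw [h2, h1]; rfl
  show shannon (fun a : ιA => ∑ b : ιB, jointProb P Q ρ (a, b)) +
      shannon (fun b : ιB => ∑ a : ιA, jointProb P Q ρ (a, b)) -
      shannon (jointProb P Q ρ) = 0
  rw [hkey]
  have hm1 : (fun a : ιA => ∑ b : ιB, f a * g b) = f := by
    funext a
    rw [← Finset.mul_sum, hgs, mul_one]
  have hm2 : (fun b : ιB => ∑ a : ιA, f a * g b) = g := by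
    funext b
    rw [← Finset.sum_mul, hfs, one_mul]
  rw [hm1, hm2, shannon_prod f g hfs hgs]
  ring

/-- The trivial one-outcome PVM. -/
def trivPVM : PVM (Fin 1) (Fin 2) where
  fintype := inferInstance
  proj := fun _ => 1
  herm := fun _ => Matrix.isHermitian_one
  idem := fun _ => Matrix.one_mul 1
  orthogonal := fun a b hab => absurd (Subsingleton.elim a b) hab
  complete := by simp

end Backward

/-- for a two-qubit density matrix, the measured mutual information
vanishes (every product PVM gives zero mutual information) iff the state is the product
of its marginals; consequently positive measured mutual information certifies that the
state is not a product state. -/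
theorem measured_mi_zero_iff_product
    (ρ : Matrix (Fin 2 × Fin 2) (Fin 2 × Fin 2) ℂ)
    (hpsd : ρ.PosSemidef) (htr : ρ.trace = 1) :
    ((∀ (ιA ιB : Type) (P : PVM ιA (Fin 2)) (Q : PVM ιB (Fin 2)), miOf P Q ρ = 0) ↔
        ρ = ptraceR ρ ⊗ₖ ptraceL ρ) ∧
    (0 < measuredMI ρ → ρ ≠ ptraceR ρ ⊗ₖ ptraceL ρ) := by
  constructor
  · exact ⟨fun h => forward_dir hpsd htr h, fun hprod => backward_dir hpsd htr hprod⟩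
  · intro hpos hprod
    have hall := backward_dir hpsd htr hprod
    have hset : {r : ℝ | ∃ (ιA ιB : Type) (P : PVM ιA (Fin 2)) (Q : PVM ιB (Fin 2)),
        r = miOf P Q ρ} = {0} := by
      ext r
      simp only [Set.mem_setOf_eq, Set.mem_singleton_iff]
      constructor
      · rintro ⟨ιA, ιB, P, Q, rfl⟩
        exact hall ιA ιB P Q
      · rintro rfl
        exact ⟨Fin 1, Fin 1, trivPVM, trivPVM, (hall _ _ _ _).symm⟩
    rw [measuredMI, hset, csSup_singleton] at hpos
    exact lt_irrefl 0 hpos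

end
end

section
/- Let γ ∈ [0,1] and let E_γ denote the two-qubit depolarizing channel E_γ(ρ) = (1−γ)ρ + (γ/4)I₄. Then: (i) measuring all four qubits of the state (I₂/2) ⊗ E_γ(|Φ⟩⟨Φ|) ⊗ (I₂/2) in the computational basis yields an outcome distribution with Shannon entropy 4 − ((2−γ)/2)·log₂(2−γ) − (γ/2)·log₂γ; and (ii) measuring all four qubits of the state E_γ(σ₂) ⊗ E_γ(σ₂) in the computational basis yields an outcome distribution with Shannon entropy 4 − (2−γ)·log₂(2−γ) − γ·log₂γ. -/
open scoped Kronecker Matrix Classical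

noncomputable section

/-- The maximally mixed single-qubit state `I₂/2`. -/
def idHalf : Matrix (Fin 2) (Fin 2) ℂ := ((1 : ℂ)/2) • 1

lemma bell_diag_aux (b : Fin 2 × Fin 2) :
    bellState b b = if b.1 = b.2 then (1:ℂ)/2 else 0 := by
  simp only [bellState, bellVec, Matrix.of_apply]
  split <;> simp
  rw [← Complex.ofReal_inv, ← Complex.ofReal_mul, ← mul_inv,
    Real.mul_self_sqrt (by norm_num)]
  norm_num

lemma depol_bell_diag_aux (γ : ℝ) (b : Fin 2 × Fin 2) :
    depol2 γ bellState b b = if b.1 = b.2 then ((2-γ:ℝ)/4 : ℂ) else ((γ:ℝ)/4 : ℂ) := by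
  simp [depol2, bell_diag_aux, Matrix.one_apply]
  split <;> push_cast <;> ring

lemma depol_sigma_diag_aux (γ : ℝ) (b : Fin 2 × Fin 2) :
    depol2 γ sigma2 b b = if b.1 = b.2 then ((2-γ:ℝ)/4 : ℂ) else ((γ:ℝ)/4 : ℂ) := by
  simp [depol2, sigma2, Matrix.one_apply]
  split <;> ring

lemma p1_aux (γ : ℝ) (x : Fin 2 × ((Fin 2 × Fin 2) × Fin 2)) :
    ((idHalf ⊗ₖ (depol2 γ bellState ⊗ₖ idHalf)) x x).re
      = if x.2.1.1 = x.2.1.2 then (2-γ)/16 else γ/16 := by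
  obtain ⟨a, ⟨b, c⟩⟩ := x
  simp [Matrix.kroneckerMap_apply, idHalf, depol_bell_diag_aux, Matrix.one_apply]
  split <;> norm_num <;> ring

lemma p2_aux (γ : ℝ) (x : (Fin 2 × Fin 2) × (Fin 2 × Fin 2)) :
    ((depol2 γ sigma2 ⊗ₖ depol2 γ sigma2) x x).re
      = (if x.1.1 = x.1.2 then (2-γ)/4 else γ/4) * (if x.2.1 = x.2.2 then (2-γ)/4 else γ/4) := by
  obtain ⟨b, c⟩ := x
  simp [Matrix.kroneckerMap_apply, depol_sigma_diag_aux]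
  split <;> split <;> norm_num

lemma logb16_aux : Real.logb 2 16 = 4 := by
  rw [show (16:ℝ) = 2^(4:ℕ) by norm_num, Real.logb_pow]
  simp [Real.logb_self_eq_one]

lemma logb4_aux : Real.logb 2 4 = 2 := by
  rw [show (4:ℝ) = 2^(2:ℕ) by norm_num, Real.logb_pow]
  simp [Real.logb_self_eq_one]

/-- computational-basis Shannon entropies of the two noisy four-qubit
triangle-network states. -/
theorem computational_entropy_of_noisy_triangle_states
    (γ : ℝ) (hγ : γ ∈ Set.Icc (0 : ℝ) 1) :
    shannon (fun x : Fin 2 × ((Fin 2 × Fin 2) × Fin 2) =>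
        ((idHalf ⊗ₖ (depol2 γ bellState ⊗ₖ idHalf)) x x).re)
      = 4 - ((2 - γ)/2) * Real.logb 2 (2 - γ) - (γ/2) * Real.logb 2 γ ∧
    shannon (fun x : (Fin 2 × Fin 2) × (Fin 2 × Fin 2) =>
        ((depol2 γ sigma2 ⊗ₖ depol2 γ sigma2) x x).re)
      = 4 - (2 - γ) * Real.logb 2 (2 - γ) - γ * Real.logb 2 γ := by
  have h2γ : (2 - γ) ≠ 0 := by have := hγ.2; intro h; linarith
  have hA : Real.logb 2 ((2 - γ)/16) = Real.logb 2 (2 - γ) - 4 := by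
    rw [Real.logb_div h2γ (by norm_num), logb16_aux]
  have hB : γ * Real.logb 2 (γ/16) = γ * Real.logb 2 γ - 4*γ := by
    rcases hγ.1.eq_or_lt with h | h
    · simp [← h]
    · rw [Real.logb_div (ne_of_gt h) (by norm_num), logb16_aux]; ring
  have h1 : Real.logb 2 ((2-γ)/4 * ((2-γ)/4)) = 2 * Real.logb 2 (2-γ) - 4 := by
    rw [Real.logb_mul (by positivity) (by positivity),
      Real.logb_div h2γ (by norm_num), logb4_aux]; ring
  have h2 : γ * Real.logb 2 ((2-γ)/4 * (γ/4))
      = γ * (Real.logb 2 (2-γ) + Real.logb 2 γ) - 4*γ := by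
    rcases hγ.1.eq_or_lt with h | h
    · simp [← h]
    · rw [Real.logb_mul (by positivity) (by positivity),
        Real.logb_div h2γ (by norm_num), Real.logb_div (ne_of_gt h) (by norm_num),
        logb4_aux]; ring
  have h3 : γ * Real.logb 2 (γ/4 * (γ/4)) = 2 * γ * Real.logb 2 γ - 4*γ := by
    rcases hγ.1.eq_or_lt with h | h
    · simp [← h]
    · rw [Real.logb_mul (by positivity) (by positivity),
        Real.logb_div (ne_of_gt h) (by norm_num), logb4_aux]; ring
  constructor
  · simp only [shannon, p1_aux, Fintype.sum_prod_type, Fin.sum_univ_two]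
    norm_num
    linear_combination (-(2-γ)/2) * hA + (-(1/2)) * hB
  · simp only [shannon, p2_aux, Fintype.sum_prod_type, Fin.sum_univ_two]
    norm_num
    rw [mul_comm (γ/4) ((2-γ)/4)]
    linear_combination (-(2-γ)^2/4) * h1 + (-(2-γ)/2) * h2 + (-γ/4) * h3

end
end

section
/- Let γ ∈ [0,1] and let E_γ denote the two-qubit depolarizing channel E_γ(ρ) = (1−γ)ρ + (γ/4)I₄. Then the measured mutual information of the depolarized Bell state equals that of the depolarized shared random bit: I_m(E_γ(|Φ⟩⟨Φ|)) = I_m(E_γ(σ₂)) = ((2−γ)/2)·log₂(2−γ) + (γ/2)·log₂γ. -/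
open scoped Kronecker Matrix Classical

noncomputable section

namespace Aux

open Complex Real

variable {P Q : Matrix (Fin 2) (Fin 2) ℂ}

lemma herm_off (hH : P.IsHermitian) : P 1 0 = starRingEnd ℂ (P 0 1) := by
  simpa [Matrix.conjTranspose_apply] using (congrFun (congrFun hH 1) 0).symm

lemma herm_diag0 (hH : P.IsHermitian) : P 0 0 = ((P 0 0).re : ℂ) :=
  (hH.coe_re_apply_self 0).symm

lemma herm_diag1 (hH : P.IsHermitian) : P 1 1 = ((P 1 1).re : ℂ) :=
  (hH.coe_re_apply_self 1).symm

lemma idem00 (hH : P.IsHermitian) (hI : P * P = P) :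
    (P 0 0).re ^ 2 + normSq (P 0 1) = (P 0 0).re := by
  have h := congrFun (congrFun hI 0) 0
  rw [Matrix.mul_apply, Fin.sum_univ_two, herm_off hH, mul_conj] at h
  have h2 : (((P 0 0).re ^ 2 + normSq (P 0 1) : ℝ) : ℂ) = (((P 0 0).re : ℝ) : ℂ) := by
    push_cast
    rw [← herm_diag0 hH] at *
    linear_combination h
  exact_mod_cast h2

lemma idem11 (hH : P.IsHermitian) (hI : P * P = P) :
    (P 1 1).re ^ 2 + normSq (P 0 1) = (P 1 1).re := by
  have h := congrFun (congrFun hI 1) 1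
  rw [Matrix.mul_apply, Fin.sum_univ_two, herm_off hH] at h
  rw [show starRingEnd ℂ (P 0 1) * P 0 1 = (normSq (P 0 1) : ℂ) by rw [mul_comm, mul_conj]] at h
  have h2 : (((P 1 1).re ^ 2 + normSq (P 0 1) : ℝ) : ℂ) = (((P 1 1).re : ℝ) : ℂ) := by
    push_cast
    rw [← herm_diag1 hH] at *
    linear_combination h
  exact_mod_cast h2

lemma diag0_nonneg (hH : P.IsHermitian) (hI : P * P = P) : 0 ≤ (P 0 0).re := by
  have := idem00 hH hI
  nlinarith [normSq_nonneg (P 0 1), sq_nonneg ((P 0 0).re)]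

lemma diag1_nonneg (hH : P.IsHermitian) (hI : P * P = P) : 0 ≤ (P 1 1).re := by
  have := idem11 hH hI
  nlinarith [normSq_nonneg (P 0 1), sq_nonneg ((P 1 1).re)]

lemma offdiag_sq_le (hH : P.IsHermitian) (hI : P * P = P) :
    normSq (P 0 1) ≤ (P 0 0).re * (P 1 1).re := by
  by_cases h01 : P 0 1 = 0
  · simp [h01]
    exact mul_nonneg (diag0_nonneg hH hI) (diag1_nonneg hH hI)
  · have h := congrFun (congrFun hI 0) 1
    rw [Matrix.mul_apply, Fin.sum_univ_two] at h
    have htr : (P 0 0).re + (P 1 1).re = 1 := by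
      have h2 : (P 0 0 + P 1 1 - 1) * P 0 1 = 0 := by linear_combination h
      rcases mul_eq_zero.1 h2 with h3 | h3
      · have h4 : ((((P 0 0).re + (P 1 1).re : ℝ)) : ℂ) = ((1:ℝ) : ℂ) := by
          push_cast
          rw [← herm_diag0 hH, ← herm_diag1 hH]
          linear_combination h3
        exact_mod_cast h4
      · exact absurd h3 h01
    have hsub : (P 1 1).re = 1 - (P 0 0).re := by linarith
    rw [hsub]
    nlinarith [idem00 hH hI]

lemma trace_re (hH : P.IsHermitian) : (P.trace).re = (P 0 0).re + (P 1 1).re := by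
  simp [Matrix.trace, Fin.sum_univ_two, Matrix.diag]

lemma trace_eq (hH : P.IsHermitian) : P.trace = (((P 0 0).re + (P 1 1).re : ℝ) : ℂ) := by
  rw [Matrix.trace, Fin.sum_univ_two]
  push_cast
  rw [← herm_diag0 hH, ← herm_diag1 hH]
  rfl

lemma trace_re_nonneg (hH : P.IsHermitian) (hI : P * P = P) : 0 ≤ (P.trace).re := by
  rw [trace_re hH]
  exact add_nonneg (diag0_nonneg hH hI) (diag1_nonneg hH hI)

lemma trace_kron_bell (A B : Matrix (Fin 2) (Fin 2) ℂ) :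
    ((A ⊗ₖ B) * bellState).trace
      = (A 0 0 * B 0 0 + A 0 1 * B 0 1 + A 1 0 * B 1 0 + A 1 1 * B 1 1) / 2 := by
  have hc : (((Real.sqrt 2 : ℝ) : ℂ))⁻¹ * (((Real.sqrt 2 : ℝ) : ℂ))⁻¹ = (2:ℂ)⁻¹ := by
    rw [← mul_inv, ← ofReal_mul, Real.mul_self_sqrt (by norm_num)]
    norm_num
  simp only [Matrix.trace, Matrix.diag, Matrix.mul_apply, Matrix.kroneckerMap_apply,
    bellState, bellVec, Matrix.of_apply, Fintype.sum_prod_type, Fin.sum_univ_two]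
  norm_num
  ring_nf
  rw [show ((Real.sqrt 2 : ℝ) : ℂ)⁻¹ ^ 2 = (2:ℂ)⁻¹ by rw [sq]; exact hc]
  ring

lemma trace_kron_sigma2 (A B : Matrix (Fin 2) (Fin 2) ℂ) :
    ((A ⊗ₖ B) * sigma2).trace = (A 0 0 * B 0 0 + A 1 1 * B 1 1) / 2 := by
  simp only [Matrix.trace, Matrix.diag, Matrix.mul_apply, Matrix.kroneckerMap_apply,
    sigma2, Matrix.of_apply, Fintype.sum_prod_type, Fin.sum_univ_two]
  norm_num [Prod.ext_iff]
  ring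

lemma trace_kron_depol (γ : ℝ) (ρ₀ : Matrix (Fin 2 × Fin 2) (Fin 2 × Fin 2) ℂ)
    (A B : Matrix (Fin 2) (Fin 2) ℂ) :
    ((A ⊗ₖ B) * depol2 γ ρ₀).trace
      = (1 - (γ:ℂ)) * ((A ⊗ₖ B) * ρ₀).trace + (γ:ℂ)/4 * (A.trace * B.trace) := by
  rw [depol2, Matrix.mul_add, Matrix.mul_smul, Matrix.mul_smul, Matrix.mul_one,
    Matrix.trace_add, Matrix.trace_smul, Matrix.trace_smul, Matrix.trace_kronecker]
  simp [smul_eq_mul]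

lemma reX_bell (γ : ℝ) (hHP : P.IsHermitian) (hHQ : Q.IsHermitian) :
    (((P ⊗ₖ Q) * depol2 γ bellState).trace).re
      = (1-γ) * ((P 0 0).re * (Q 0 0).re + (P 1 1).re * (Q 1 1).re
            + 2 * ((P 0 1) * (Q 0 1)).re)/2
        + γ/4 * (((P 0 0).re + (P 1 1).re) * ((Q 0 0).re + (Q 1 1).re)) := by
  have key : ((P ⊗ₖ Q) * depol2 γ bellState).trace
      = (((1-γ) * ((P 0 0).re * (Q 0 0).re + (P 1 1).re * (Q 1 1).re
            + 2 * ((P 0 1) * (Q 0 1)).re)/2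
        + γ/4 * (((P 0 0).re + (P 1 1).re) * ((Q 0 0).re + (Q 1 1).re)) : ℝ) : ℂ) := by
    rw [trace_kron_depol, trace_kron_bell, trace_eq hHP, trace_eq hHQ,
      herm_off hHP, herm_off hHQ, herm_diag0 hHP, herm_diag1 hHP,
      herm_diag0 hHQ, herm_diag1 hHQ]
    have hzw : P 0 1 * Q 0 1 + starRingEnd ℂ (P 0 1) * starRingEnd ℂ (Q 0 1)
        = 2 * (((P 0 1 * Q 0 1).re : ℝ) : ℂ) := by
      rw [← map_mul, Complex.add_conj]
      push_cast; ring
    push_cast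
    simp only [Complex.ofReal_re]
    linear_combination ((1 - (γ:ℂ))/2) * hzw
  rw [key, Complex.ofReal_re]

lemma reX_sigma2 (γ : ℝ) (hHP : P.IsHermitian) (hHQ : Q.IsHermitian) :
    (((P ⊗ₖ Q) * depol2 γ sigma2).trace).re
      = (1-γ) * ((P 0 0).re * (Q 0 0).re + (P 1 1).re * (Q 1 1).re)/2
        + γ/4 * (((P 0 0).re + (P 1 1).re) * ((Q 0 0).re + (Q 1 1).re)) := by
  have key : ((P ⊗ₖ Q) * depol2 γ sigma2).trace
      = (((1-γ) * ((P 0 0).re * (Q 0 0).re + (P 1 1).re * (Q 1 1).re)/2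
        + γ/4 * (((P 0 0).re + (P 1 1).re) * ((Q 0 0).re + (Q 1 1).re)) : ℝ) : ℂ) := by
    rw [trace_kron_depol, trace_kron_sigma2, trace_eq hHP, trace_eq hHQ,
      herm_diag0 hHP, herm_diag1 hHP, herm_diag0 hHQ, herm_diag1 hHQ]
    push_cast
    simp only [Complex.ofReal_re]
    ring
  rw [key, Complex.ofReal_re]

lemma chord (γ : ℝ) (h0 : 0 ≤ γ) (h1 : γ < 1) (c : ℝ) (hc1 : γ ≤ c) (hc2 : c ≤ 2 - γ) :
    c * logb 2 c ≤ (((2-γ) * logb 2 (2-γ) - γ * logb 2 γ)/(2-2*γ)) * c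
      + (γ * logb 2 γ - (((2-γ) * logb 2 (2-γ) - γ * logb 2 γ)/(2-2*γ)) * γ) := by
  have hd : (0:ℝ) < 2 - 2*γ := by linarith
  set θ : ℝ := (2 - γ - c)/(2 - 2*γ) with hθ
  have hθ0 : 0 ≤ θ := by
    apply div_nonneg (by linarith) (by linarith)
  have hθ1 : 0 ≤ 1 - θ := by
    rw [hθ, sub_nonneg, div_le_one hd]; linarith
  have hcomb : θ * γ + (1 - θ) * (2 - γ) = c := by
    have h : θ * (2-2*γ) = 2-γ-c := by rw [hθ]; exact div_mul_cancel₀ _ hd.ne'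
    linear_combination (-1:ℝ) * h
  have hconv := Real.convexOn_mul_log.2 (Set.mem_Ici.2 h0)
    (Set.mem_Ici.2 (by linarith : (0:ℝ) ≤ 2 - γ)) hθ0 hθ1 (by ring)
  rw [smul_eq_mul, smul_eq_mul, smul_eq_mul, smul_eq_mul, hcomb] at hconv
  have hlog2 : (0:ℝ) < Real.log 2 := Real.log_pos (by norm_num)
  have hgoal : c * logb 2 c ≤ θ * (γ * logb 2 γ) + (1-θ) * ((2-γ) * logb 2 (2-γ)) := by
    simp only [Real.logb]
    calc c * (Real.log c / Real.log 2) = (c * Real.log c)/Real.log 2 := by ring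
      _ ≤ (θ * (γ * Real.log γ) + (1-θ) * ((2-γ) * Real.log (2-γ)))/Real.log 2 := by
          gcongr
      _ = θ * (γ * (Real.log γ / Real.log 2))
            + (1-θ) * ((2-γ) * (Real.log (2-γ) / Real.log 2)) := by ring
  calc c * logb 2 c ≤ θ * (γ * logb 2 γ) + (1-θ) * ((2-γ) * logb 2 (2-γ)) := hgoal
    _ = _ := by
      have h : θ * (2-2*γ) = 2-γ-c := by rw [hθ]; exact div_mul_cancel₀ _ hd.ne'
      have hA : ((2-γ) * logb 2 (2-γ) - γ * logb 2 γ)/(2-2*γ) * (2-2*γ)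
          = (2-γ) * logb 2 (2-γ) - γ * logb 2 γ := div_mul_cancel₀ _ hd.ne'
      linear_combination (θ - 1) * hA - (((2-γ) * logb 2 (2-γ) - γ * logb 2 γ)/(2-2*γ)) * h

lemma perb {ι : Type*} [Fintype ι] (γ pB : ℝ) (hγ0 : 0 ≤ γ) (hγ1 : γ ≤ 1) (hpB : 0 ≤ pB)
    (x w : ι → ℝ) (hw : ∀ a, 0 ≤ w a) (hsw : ∑ a, w a = 1) (hsx : ∑ a, x a = pB)
    (hlow : ∀ a, γ * (pB * w a) ≤ x a) (hup : ∀ a, x a ≤ (2-γ) * (pB * w a)) :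
    (∑ a, (x a * logb 2 (x a) - x a * logb 2 (w a))) - pB * logb 2 pB
      ≤ pB * (((2 - γ)/2) * logb 2 (2 - γ) + (γ/2) * logb 2 γ) := by
  rcases eq_or_lt_of_le hγ1 with hγe | hγlt
  · subst hγe
    have hxw : ∀ a, x a = pB * w a := by
      intro a
      have h1 := hlow a; have h2 := hup a
      linarith
    have hterm : ∀ a, x a * logb 2 (x a) - x a * logb 2 (w a) = x a * logb 2 pB := by
      intro a
      by_cases hw0 : w a = 0
      · simp [hxw a, hw0]
      · by_cases hpB0 : pB = 0
        · simp [hxw a, hpB0]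
        · rw [hxw a, logb_mul hpB0 hw0]
          ring
    have hsum : ∑ a, (x a * logb 2 (x a) - x a * logb 2 (w a)) = pB * logb 2 pB := by
      rw [Finset.sum_congr rfl (fun a _ => hterm a), ← Finset.sum_mul, hsx]
    rw [hsum]
    norm_num
  · by_cases hpB0 : pB = 0
    · have hx0 : ∀ a, x a = 0 := by
        intro a
        have h1 := hlow a; have h2 := hup a
        rw [hpB0] at h1 h2
        linarith
      simp [hx0, hpB0]
    · have hpBpos : 0 < pB := lt_of_le_of_ne hpB (Ne.symm hpB0)
      set A : ℝ := ((2-γ) * logb 2 (2-γ) - γ * logb 2 γ)/(2-2*γ) with hA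
      set B : ℝ := γ * logb 2 γ - A * γ with hB
      have hAB : A + B = ((2 - γ)/2) * logb 2 (2 - γ) + (γ/2) * logb 2 γ := by
        rw [hB, hA]
        have : (2:ℝ) - 2*γ ≠ 0 := by linarith
        field_simp
        ring
      have key : ∀ a, x a * logb 2 (x a) - x a * logb 2 (w a) - x a * logb 2 pB
          ≤ A * x a + B * (pB * w a) := by
        intro a
        by_cases hw0 : w a = 0
        · have hx0 : x a = 0 := by
            have h1 := hlow a; have h2 := hup a
            rw [hw0] at h1 h2
            linarith
          simp [hx0, hw0]
        · have hwpos : 0 < w a := lt_of_le_of_ne (hw a) (Ne.symm hw0)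
          have hden : 0 < pB * w a := by positivity
          by_cases hx0 : x a = 0
          · have hγ00 : γ = 0 := by
              have h1 := hlow a
              rw [hx0] at h1
              nlinarith
            have hB0 : 0 ≤ B := by
              rw [hB, hγ00]
              norm_num
            have hBn := mul_nonneg hB0 hden.le
            simp [hx0]
            nlinarith
          · have hxpos : 0 < x a := lt_of_le_of_ne
              (le_trans (by positivity) (hlow a)) (Ne.symm hx0)
            set c : ℝ := x a / (pB * w a) with hc
            have hcpos : 0 < c := by positivity
            have hc1 : γ ≤ c := by
              rw [hc, le_div_iff₀ hden]
              linarith [hlow a]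
            have hc2 : c ≤ 2 - γ := by
              rw [hc, div_le_iff₀ hden]
              linarith [hup a]
            have hxe : x a = c * (pB * w a) := by
              rw [hc]; field_simp
            have hlogx : logb 2 (x a) = logb 2 c + logb 2 pB + logb 2 (w a) := by
              rw [hxe, logb_mul (ne_of_gt hcpos) (ne_of_gt hden),
                logb_mul (ne_of_gt hpBpos) (ne_of_gt hwpos)]
              ring
            have hchord := chord γ hγ0 hγlt c hc1 hc2
            calc x a * logb 2 (x a) - x a * logb 2 (w a) - x a * logb 2 pB
                = (pB * w a) * (c * logb 2 c) := by rw [hlogx]; rw [hxe]; ring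
              _ ≤ (pB * w a) * (A * c + B) := by
                  apply mul_le_mul_of_nonneg_left _ (le_of_lt hden)
                  rw [hA]; exact hchord
              _ = A * x a + B * (pB * w a) := by rw [hxe]; ring
      have hre : ∑ a, (x a * logb 2 (x a) - x a * logb 2 (w a) - x a * logb 2 pB)
          = (∑ a, (x a * logb 2 (x a) - x a * logb 2 (w a))) - pB * logb 2 pB := by
        rw [Finset.sum_sub_distrib, ← Finset.sum_mul, hsx]
      calc (∑ a, (x a * logb 2 (x a) - x a * logb 2 (w a))) - pB * logb 2 pB
          = ∑ a, (x a * logb 2 (x a) - x a * logb 2 (w a) - x a * logb 2 pB) := hre.symm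
        _ ≤ ∑ a, (A * x a + B * (pB * w a)) := Finset.sum_le_sum (fun a _ => key a)
        _ = A * pB + B * pB := by
            rw [Finset.sum_add_distrib, ← Finset.mul_sum, hsx, ← Finset.mul_sum,
              ← Finset.mul_sum, hsw]
            ring
        _ = pB * (((2 - γ)/2) * logb 2 (2 - γ) + (γ/2) * logb 2 γ) := by
            rw [← hAB]; ring

/-- master upper bound -/
lemma miOf_le (γ : ℝ) (hγ0 : 0 ≤ γ) (hγ1 : γ ≤ 1)
    (ρ : Matrix (Fin 2 × Fin 2) (Fin 2 × Fin 2) ℂ)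
    (H1 : ∀ A : Matrix (Fin 2) (Fin 2) ℂ, A.IsHermitian → A * A = A →
      (((A ⊗ₖ (1 : Matrix (Fin 2) (Fin 2) ℂ)) * ρ).trace).re = (A.trace).re / 2)
    (H2 : ∀ B : Matrix (Fin 2) (Fin 2) ℂ, B.IsHermitian → B * B = B →
      ((((1 : Matrix (Fin 2) (Fin 2) ℂ) ⊗ₖ B) * ρ).trace).re = (B.trace).re / 2)
    (H3low : ∀ A B : Matrix (Fin 2) (Fin 2) ℂ, A.IsHermitian → A * A = A →
      B.IsHermitian → B * B = B →
      γ * ((B.trace).re / 2 * ((A.trace).re / 2)) ≤ (((A ⊗ₖ B) * ρ).trace).re)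
    (H3up : ∀ A B : Matrix (Fin 2) (Fin 2) ℂ, A.IsHermitian → A * A = A →
      B.IsHermitian → B * B = B →
      (((A ⊗ₖ B) * ρ).trace).re ≤ (2 - γ) * ((B.trace).re / 2 * ((A.trace).re / 2)))
    {ιA ιB : Type} (P : PVM ιA (Fin 2)) (Q : PVM ιB (Fin 2)) :
    miOf P Q ρ ≤ ((2 - γ)/2) * logb 2 (2 - γ) + (γ/2) * logb 2 γ := by
  letI := P.fintype; letI := Q.fintype
  have hkr : ∀ a, ∑ b, (P.proj a ⊗ₖ Q.proj b) = P.proj a ⊗ₖ (1 : Matrix (Fin 2) (Fin 2) ℂ) := by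
    intro a
    rw [← Q.complete]
    ext x y
    simp [Matrix.sum_apply, Finset.mul_sum]
  have hkl : ∀ b, ∑ a, (P.proj a ⊗ₖ Q.proj b) = (1 : Matrix (Fin 2) (Fin 2) ℂ) ⊗ₖ Q.proj b := by
    intro b
    rw [← P.complete]
    ext x y
    simp [Matrix.sum_apply, Finset.sum_mul]
  have hmargA : ∀ a, ∑ b, jointProb P Q ρ (a, b) = (P.proj a).trace.re / 2 := by
    intro a
    have e : ∑ b, jointProb P Q ρ (a, b)
        = (((∑ b, P.proj a ⊗ₖ Q.proj b) * ρ).trace).re := by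
      rw [Finset.sum_mul, Matrix.trace_sum, Complex.re_sum]
      rfl
    rw [e, hkr a, H1 _ (P.herm a) (P.idem a)]
  have hmargB : ∀ b, ∑ a, jointProb P Q ρ (a, b) = (Q.proj b).trace.re / 2 := by
    intro b
    have e : ∑ a, jointProb P Q ρ (a, b)
        = (((∑ a, P.proj a ⊗ₖ Q.proj b) * ρ).trace).re := by
      rw [Finset.sum_mul, Matrix.trace_sum, Complex.re_sum]
      rfl
    rw [e, hkl b, H2 _ (Q.herm b) (Q.idem b)]
  have hpAnn : ∀ a : ιA, 0 ≤ (P.proj a).trace.re / 2 := fun a => by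
    have := trace_re_nonneg (P.herm a) (P.idem a); linarith
  have hpBnn : ∀ b : ιB, 0 ≤ (Q.proj b).trace.re / 2 := fun b => by
    have := trace_re_nonneg (Q.herm b) (Q.idem b); linarith
  have hsumA : ∑ a, (P.proj a).trace.re / 2 = 1 := by
    have h2 : ∑ a, (P.proj a).trace = (2:ℂ) := by
      rw [← Matrix.trace_sum, P.complete, Matrix.trace_one]
      simp
    calc ∑ a, (P.proj a).trace.re / 2 = (∑ a, (P.proj a).trace).re / 2 := by
          rw [Complex.re_sum, Finset.sum_div]
      _ = 1 := by rw [h2]; norm_num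
  have hsumB : ∑ b, (Q.proj b).trace.re / 2 = 1 := by
    have h2 : ∑ b, (Q.proj b).trace = (2:ℂ) := by
      rw [← Matrix.trace_sum, Q.complete, Matrix.trace_one]
      simp
    calc ∑ b, (Q.proj b).trace.re / 2 = (∑ b, (Q.proj b).trace).re / 2 := by
          rw [Complex.re_sum, Finset.sum_div]
      _ = 1 := by rw [h2]; norm_num
  have hb : ∀ b : ιB,
      (∑ a, (jointProb P Q ρ (a, b) * logb 2 (jointProb P Q ρ (a, b))
        - jointProb P Q ρ (a, b) * logb 2 ((P.proj a).trace.re / 2)))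
        - ((Q.proj b).trace.re / 2) * logb 2 ((Q.proj b).trace.re / 2)
      ≤ ((Q.proj b).trace.re / 2)
          * (((2 - γ)/2) * logb 2 (2 - γ) + (γ/2) * logb 2 γ) := by
    intro b
    exact perb γ ((Q.proj b).trace.re / 2) hγ0 hγ1 (hpBnn b)
      (fun a => jointProb P Q ρ (a, b)) (fun a => (P.proj a).trace.re / 2)
      hpAnn hsumA (hmargB b)
      (fun a => H3low _ _ (P.herm a) (P.idem a) (Q.herm b) (Q.idem b))
      (fun a => H3up _ _ (P.herm a) (P.idem a) (Q.herm b) (Q.idem b))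
  have EmiOf : miOf P Q ρ
      = (∑ a, ∑ b, jointProb P Q ρ (a, b) * logb 2 (jointProb P Q ρ (a, b)))
        - (∑ a, ((P.proj a).trace.re / 2) * logb 2 ((P.proj a).trace.re / 2))
        - (∑ b, ((Q.proj b).trace.re / 2) * logb 2 ((Q.proj b).trace.re / 2)) := by
    unfold miOf shannon
    rw [show (fun a : ιA => ∑ b, jointProb P Q ρ (a, b))
        = (fun a : ιA => (P.proj a).trace.re / 2) from funext hmargA]
    rw [show (fun b : ιB => ∑ a, jointProb P Q ρ (a, b))
        = (fun b : ιB => (Q.proj b).trace.re / 2) from funext hmargB]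
    rw [Fintype.sum_prod_type]
    ring
  have Esum : ∑ b, ((∑ a, (jointProb P Q ρ (a, b) * logb 2 (jointProb P Q ρ (a, b))
        - jointProb P Q ρ (a, b) * logb 2 ((P.proj a).trace.re / 2)))
        - ((Q.proj b).trace.re / 2) * logb 2 ((Q.proj b).trace.re / 2))
      = miOf P Q ρ := by
    rw [EmiOf, Finset.sum_sub_distrib]
    congr 1
    simp only [Finset.sum_sub_distrib]
    congr 1
    · exact Finset.sum_comm
    · rw [Finset.sum_comm]
      exact Finset.sum_congr rfl fun a _ => by rw [← Finset.sum_mul, hmargA a]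
  calc miOf P Q ρ
      = ∑ b, ((∑ a, (jointProb P Q ρ (a, b) * logb 2 (jointProb P Q ρ (a, b))
          - jointProb P Q ρ (a, b) * logb 2 ((P.proj a).trace.re / 2)))
          - ((Q.proj b).trace.re / 2) * logb 2 ((Q.proj b).trace.re / 2)) := Esum.symm
    _ ≤ ∑ b, ((Q.proj b).trace.re / 2)
          * (((2 - γ)/2) * logb 2 (2 - γ) + (γ/2) * logb 2 γ) :=
        Finset.sum_le_sum fun b _ => hb b
    _ = ((2 - γ)/2) * logb 2 (2 - γ) + (γ/2) * logb 2 γ := by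
        rw [← Finset.sum_mul, hsumB, one_mul]

end Aux


namespace Aux
open Complex Real

lemma H1_bell (γ : ℝ) : ∀ A : Matrix (Fin 2) (Fin 2) ℂ, A.IsHermitian → A * A = A →
    (((A ⊗ₖ (1 : Matrix (Fin 2) (Fin 2) ℂ)) * depol2 γ bellState).trace).re
      = (A.trace).re / 2 := by
  intro A hA _
  rw [reX_bell γ hA Matrix.isHermitian_one, trace_re hA]
  norm_num [Matrix.one_apply]
  ring

lemma H2_bell (γ : ℝ) : ∀ B : Matrix (Fin 2) (Fin 2) ℂ, B.IsHermitian → B * B = B →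
    ((((1 : Matrix (Fin 2) (Fin 2) ℂ) ⊗ₖ B) * depol2 γ bellState).trace).re
      = (B.trace).re / 2 := by
  intro B hB _
  rw [reX_bell γ Matrix.isHermitian_one hB, trace_re hB]
  norm_num [Matrix.one_apply]
  ring

lemma H1_sigma2 (γ : ℝ) : ∀ A : Matrix (Fin 2) (Fin 2) ℂ, A.IsHermitian → A * A = A →
    (((A ⊗ₖ (1 : Matrix (Fin 2) (Fin 2) ℂ)) * depol2 γ sigma2).trace).re
      = (A.trace).re / 2 := by
  intro A hA _
  rw [reX_sigma2 γ hA Matrix.isHermitian_one, trace_re hA]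
  norm_num [Matrix.one_apply]
  ring

lemma H2_sigma2 (γ : ℝ) : ∀ B : Matrix (Fin 2) (Fin 2) ℂ, B.IsHermitian → B * B = B →
    ((((1 : Matrix (Fin 2) (Fin 2) ℂ) ⊗ₖ B) * depol2 γ sigma2).trace).re
      = (B.trace).re / 2 := by
  intro B hB _
  rw [reX_sigma2 γ Matrix.isHermitian_one hB, trace_re hB]
  norm_num [Matrix.one_apply]
  ring

lemma cross_bound {A B : Matrix (Fin 2) (Fin 2) ℂ} (hA : A.IsHermitian) (hIA : A * A = A)
    (hB : B.IsHermitian) (hIB : B * B = B) :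
    ((A 0 1 * B 0 1).re)^2 ≤ ((A 0 0).re * (A 1 1).re) * ((B 0 0).re * (B 1 1).re) := by
  have h1 : ((A 0 1 * B 0 1).re)^2 ≤ normSq (A 0 1 * B 0 1) := by
    rw [sq]; exact Complex.re_sq_le_normSq _
  rw [normSq_mul] at h1
  have h2 := offdiag_sq_le hA hIA
  have h3 := offdiag_sq_le hB hIB
  nlinarith [normSq_nonneg (A 0 1), normSq_nonneg (B 0 1),
    diag0_nonneg hA hIA, diag1_nonneg hA hIA, diag0_nonneg hB hIB, diag1_nonneg hB hIB]

lemma H3low_bell (γ : ℝ) (hγ1 : γ ≤ 1) :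
    ∀ A B : Matrix (Fin 2) (Fin 2) ℂ, A.IsHermitian → A * A = A →
      B.IsHermitian → B * B = B →
      γ * ((B.trace).re / 2 * ((A.trace).re / 2))
        ≤ (((A ⊗ₖ B) * depol2 γ bellState).trace).re := by
  intro A B hA hIA hB hIB
  rw [reX_bell γ hA hB, trace_re hA, trace_re hB]
  have hn := cross_bound hA hIA hB hIB
  have hpos : 0 ≤ (A 0 0).re * (B 0 0).re + (A 1 1).re * (B 1 1).re
      + 2 * (A 0 1 * B 0 1).re := by
    nlinarith [hn, sq_nonneg ((A 0 0).re * (B 0 0).re - (A 1 1).re * (B 1 1).re),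
      sq_nonneg ((A 0 0).re * (B 0 0).re + (A 1 1).re * (B 1 1).re + 2 * (A 0 1 * B 0 1).re),
      mul_nonneg (diag0_nonneg hA hIA) (diag0_nonneg hB hIB),
      mul_nonneg (diag1_nonneg hA hIA) (diag1_nonneg hB hIB)]
  have hfull := mul_nonneg (by linarith : (0:ℝ) ≤ 1 - γ) hpos
  nlinarith [hfull]

lemma H3up_bell (γ : ℝ) (hγ1 : γ ≤ 1) :
    ∀ A B : Matrix (Fin 2) (Fin 2) ℂ, A.IsHermitian → A * A = A →
      B.IsHermitian → B * B = B →
      (((A ⊗ₖ B) * depol2 γ bellState).trace).re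
        ≤ (2 - γ) * ((B.trace).re / 2 * ((A.trace).re / 2)) := by
  intro A B hA hIA hB hIB
  rw [reX_bell γ hA hB, trace_re hA, trace_re hB]
  have hn := cross_bound hA hIA hB hIB
  have hpos : 0 ≤ (A 0 0).re * (B 1 1).re + (A 1 1).re * (B 0 0).re
      - 2 * (A 0 1 * B 0 1).re := by
    nlinarith [hn, sq_nonneg ((A 0 0).re * (B 1 1).re - (A 1 1).re * (B 0 0).re),
      sq_nonneg ((A 0 0).re * (B 1 1).re + (A 1 1).re * (B 0 0).re - 2 * (A 0 1 * B 0 1).re),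
      mul_nonneg (diag0_nonneg hA hIA) (diag1_nonneg hB hIB),
      mul_nonneg (diag1_nonneg hA hIA) (diag0_nonneg hB hIB)]
  have hfull := mul_nonneg (by linarith : (0:ℝ) ≤ 1 - γ) hpos
  nlinarith [hfull]

lemma H3low_sigma2 (γ : ℝ) (hγ1 : γ ≤ 1) :
    ∀ A B : Matrix (Fin 2) (Fin 2) ℂ, A.IsHermitian → A * A = A →
      B.IsHermitian → B * B = B →
      γ * ((B.trace).re / 2 * ((A.trace).re / 2))
        ≤ (((A ⊗ₖ B) * depol2 γ sigma2).trace).re := by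
  intro A B hA hIA hB hIB
  rw [reX_sigma2 γ hA hB, trace_re hA, trace_re hB]
  have hpos : 0 ≤ (A 0 0).re * (B 0 0).re + (A 1 1).re * (B 1 1).re :=
    add_nonneg (mul_nonneg (diag0_nonneg hA hIA) (diag0_nonneg hB hIB))
      (mul_nonneg (diag1_nonneg hA hIA) (diag1_nonneg hB hIB))
  have hfull := mul_nonneg (by linarith : (0:ℝ) ≤ 1 - γ) hpos
  nlinarith [hfull]

lemma H3up_sigma2 (γ : ℝ) (hγ1 : γ ≤ 1) :
    ∀ A B : Matrix (Fin 2) (Fin 2) ℂ, A.IsHermitian → A * A = A →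
      B.IsHermitian → B * B = B →
      (((A ⊗ₖ B) * depol2 γ sigma2).trace).re
        ≤ (2 - γ) * ((B.trace).re / 2 * ((A.trace).re / 2)) := by
  intro A B hA hIA hB hIB
  rw [reX_sigma2 γ hA hB, trace_re hA, trace_re hB]
  have hpos : 0 ≤ (A 0 0).re * (B 1 1).re + (A 1 1).re * (B 0 0).re :=
    add_nonneg (mul_nonneg (diag0_nonneg hA hIA) (diag1_nonneg hB hIB))
      (mul_nonneg (diag1_nonneg hA hIA) (diag0_nonneg hB hIB))
  have hfull := mul_nonneg (by linarith : (0:ℝ) ≤ 1 - γ) hpos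
  nlinarith [hfull]

lemma hjoint_bell (γ : ℝ) : ∀ a b : Fin 2,
    jointProb (compPVM (Fin 2)) (compPVM (Fin 2)) (depol2 γ bellState) (a, b)
      = if a = b then (2-γ)/4 else γ/4 := by
  intro a b
  show ((((compPVM (Fin 2)).proj a ⊗ₖ (compPVM (Fin 2)).proj b)
      * depol2 γ bellState).trace).re = _
  rw [reX_bell γ ((compPVM (Fin 2)).herm a) ((compPVM (Fin 2)).herm b)]
  fin_cases a <;> fin_cases b <;>
    simp [compPVM, Matrix.diagonal_apply] <;> ring

lemma hjoint_sigma2 (γ : ℝ) : ∀ a b : Fin 2,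
    jointProb (compPVM (Fin 2)) (compPVM (Fin 2)) (depol2 γ sigma2) (a, b)
      = if a = b then (2-γ)/4 else γ/4 := by
  intro a b
  show ((((compPVM (Fin 2)).proj a ⊗ₖ (compPVM (Fin 2)).proj b)
      * depol2 γ sigma2).trace).re = _
  rw [reX_sigma2 γ ((compPVM (Fin 2)).herm a) ((compPVM (Fin 2)).herm b)]
  fin_cases a <;> fin_cases b <;>
    simp [compPVM, Matrix.diagonal_apply] <;> ring

lemma miOf_comp (γ : ℝ) (hγ0 : 0 ≤ γ) (hγ1 : γ ≤ 1)
    (ρ : Matrix (Fin 2 × Fin 2) (Fin 2 × Fin 2) ℂ)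
    (hjoint : ∀ a b : Fin 2,
      jointProb (compPVM (Fin 2)) (compPVM (Fin 2)) ρ (a, b)
        = if a = b then (2-γ)/4 else γ/4) :
    miOf (compPVM (Fin 2)) (compPVM (Fin 2)) ρ
      = ((2 - γ)/2) * logb 2 (2 - γ) + (γ/2) * logb 2 γ := by
  have hmA : ∀ a : Fin 2, ∑ b, jointProb (compPVM (Fin 2)) (compPVM (Fin 2)) ρ (a, b)
      = 1/2 := by
    intro a
    rw [Fin.sum_univ_two, hjoint a 0, hjoint a 1]
    fin_cases a <;> norm_num <;> ring
  have hmB : ∀ b : Fin 2, ∑ a, jointProb (compPVM (Fin 2)) (compPVM (Fin 2)) ρ (a, b)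
      = 1/2 := by
    intro b
    rw [Fin.sum_univ_two, hjoint 0 b, hjoint 1 b]
    fin_cases b <;> norm_num <;> ring
  have hhalf : logb 2 ((1:ℝ)/2) = -1 := by
    rw [one_div, Real.logb_inv]
    simp
  have h4 : Real.logb 2 (4:ℝ) = 2 := by
    rw [show (4:ℝ) = 2^(2:ℕ) by norm_num, Real.logb_pow]
    simp
  unfold miOf shannon
  erw [show (fun a : Fin 2 => ∑ b, jointProb (compPVM (Fin 2)) (compPVM (Fin 2)) ρ (a, b))
      = (fun _ : Fin 2 => (1:ℝ)/2) from funext hmA]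
  erw [show (fun b : Fin 2 => ∑ a, jointProb (compPVM (Fin 2)) (compPVM (Fin 2)) ρ (a, b))
      = (fun _ : Fin 2 => (1:ℝ)/2) from funext hmB]
  rw [Fintype.sum_prod_type]
  have hfin : (compPVM (Fin 2)).fintype = (inferInstance : Fintype (Fin 2)) := rfl
  rw [hfin]
  simp only [Fin.sum_univ_two, hjoint]
  norm_num [hhalf]
  by_cases hγz : γ = 0
  · subst hγz
    norm_num [hhalf, Real.logb_self_eq_one]
  · have h2γ : logb 2 ((2-γ)/4) = logb 2 (2-γ) - 2 := by
      rw [Real.logb_div (by linarith) (by norm_num), h4]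
    have hγ4 : logb 2 (γ/4) = logb 2 γ - 2 := by
      rw [Real.logb_div hγz (by norm_num), h4]
    rw [h2γ, hγ4]
    ring

end Aux

/-- the measured mutual information of the depolarized Bell state
equals that of the depolarized shared random bit, and both equal
`((2−γ)/2)·log₂(2−γ) + (γ/2)·log₂ γ`. -/
theorem measuredMI_depolarized_bell_and_sigma
    (γ : ℝ) (hγ : γ ∈ Set.Icc (0 : ℝ) 1) :
    measuredMI (depol2 γ bellState)
      = ((2 - γ)/2) * Real.logb 2 (2 - γ) + (γ/2) * Real.logb 2 γ ∧
    measuredMI (depol2 γ sigma2)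
      = ((2 - γ)/2) * Real.logb 2 (2 - γ) + (γ/2) * Real.logb 2 γ := by
  obtain ⟨hγ0, hγ1⟩ := hγ
  constructor
  · apply IsGreatest.csSup_eq
    constructor
    · exact ⟨Fin 2, Fin 2, compPVM (Fin 2), compPVM (Fin 2),
        (Aux.miOf_comp γ hγ0 hγ1 _ (Aux.hjoint_bell γ)).symm⟩
    · rintro r ⟨ιA, ιB, P, Q, rfl⟩
      exact Aux.miOf_le γ hγ0 hγ1 _ (Aux.H1_bell γ) (Aux.H2_bell γ)
        (Aux.H3low_bell γ hγ1) (Aux.H3up_bell γ hγ1) P Q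
  · apply IsGreatest.csSup_eq
    constructor
    · exact ⟨Fin 2, Fin 2, compPVM (Fin 2), compPVM (Fin 2),
        (Aux.miOf_comp γ hγ0 hγ1 _ (Aux.hjoint_sigma2 γ)).symm⟩
    · rintro r ⟨ιA, ιB, P, Q, rfl⟩
      exact Aux.miOf_le γ hγ0 hγ1 _ (Aux.H1_sigma2 γ) (Aux.H2_sigma2 γ)
        (Aux.H3low_sigma2 γ hγ1) (Aux.H3up_sigma2 γ hγ1) P Q

end
end

section
/- Let A_γ be the single-qubit amplitude-damping channel with Kraus operators K₀ = diag(1, √(1−γ)) and K₁ = ( (0, √γ), (0, 0) ), applied independently to both qubits of the Bell state |Φ⟩ = (|00⟩+|11⟩)/√2. When both qubits of (A_γ ⊗ A_γ)(|Φ⟩⟨Φ|) are measured in the σ_x eigenbasis {|+⟩, |−⟩}: (i) the mutual information of the outcome distribution equals ((2−γ)/2)·log₂(2−γ) + (γ/2)·log₂γ; and (ii) assigning values ±1 to the outcomes, the covariance of the two outcomes equals 1−γ (indeed tr((σ_x⊗σ_x)·(A_γ⊗A_γ)(|Φ⟩⟨Φ|)) = 1−γ and both single-qubit means vanish). -/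
open scoped Kronecker Matrix Classical

noncomputable section

/-- Pauli X. -/
def pauliX : Matrix (Fin 2) (Fin 2) ℂ := !![0, 1; 1, 0]
/-- Pauli Y. -/
def pauliY : Matrix (Fin 2) (Fin 2) ℂ := !![0, -Complex.I; Complex.I, 0]
/-- Pauli Z. -/
def pauliZ : Matrix (Fin 2) (Fin 2) ℂ := !![1, 0; 0, -1]

/-- The values `±1` assigned to the two outcomes of a qubit measurement. -/
def pmVal : Fin 2 → ℝ := ![1, -1]

/-- Kraus operators of the single-qubit amplitude-damping channel `A_γ`. -/
def ampKraus (γ : ℝ) : Fin 2 → Matrix (Fin 2) (Fin 2) ℂ :=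
  ![!![1, 0; 0, ((Real.sqrt (1 - γ) : ℝ) : ℂ)],
    !![0, ((Real.sqrt γ : ℝ) : ℂ); 0, 0]]

/-- `(A_γ ⊗ A_γ)(ρ)`: the single-qubit amplitude-damping channel applied independently
to both qubits. -/
def ampBoth (γ : ℝ) (ρ : Matrix (Fin 2 × Fin 2) (Fin 2 × Fin 2) ℂ) :
    Matrix (Fin 2 × Fin 2) (Fin 2 × Fin 2) ℂ :=
  ∑ i : Fin 2, ∑ j : Fin 2,
    (ampKraus γ i ⊗ₖ ampKraus γ j) * ρ * (ampKraus γ i ⊗ₖ ampKraus γ j)ᴴ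

/-- Projectors onto the `σ_x` eigenbasis `{|+⟩, |−⟩}` (`0 ↦ +`, `1 ↦ −`). -/
def xProj : Fin 2 → Matrix (Fin 2) (Fin 2) ℂ :=
  ![!![1/2, 1/2; 1/2, 1/2], !![1/2, -(1/2); -(1/2), 1/2]]

/-- Outcome distribution of the `σ_x`-basis measurement of both qubits of the
amplitude-damped Bell state. -/
def ampXProb (γ : ℝ) : Fin 2 × Fin 2 → ℝ :=
  fun st => (((xProj st.1 ⊗ₖ xProj st.2) * ampBoth γ bellState).trace).re
def dampedBell (γ : ℝ) : Matrix (Fin 2 × Fin 2) (Fin 2 × Fin 2) ℂ :=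
  Matrix.of fun x y =>
    if x = ((0:Fin 2),(0:Fin 2)) ∧ y = (0,0) then (((1 + γ^2)/2 : ℝ) : ℂ)
    else if x = (0,0) ∧ y = (1,1) then (((1 - γ)/2 : ℝ) : ℂ)
    else if x = (1,1) ∧ y = (0,0) then (((1 - γ)/2 : ℝ) : ℂ)
    else if x = (0,1) ∧ y = (0,1) then ((γ*(1 - γ)/2 : ℝ) : ℂ)
    else if x = (1,0) ∧ y = (1,0) then ((γ*(1 - γ)/2 : ℝ) : ℂ)
    else if x = (1,1) ∧ y = (1,1) then (((1 - γ)^2/2 : ℝ) : ℂ)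
    else 0

set_option maxHeartbeats 4000000 in
lemma ampBoth_bell (γ : ℝ) (h0 : 0 ≤ γ) (h1 : γ ≤ 1) :
    ampBoth γ bellState = dampedBell γ := by
  have hx : (Real.sqrt γ : ℂ) * Real.sqrt γ = (γ : ℂ) := by
    norm_cast; exact Real.mul_self_sqrt h0
  have hy : (Real.sqrt (1-γ) : ℂ) * Real.sqrt (1-γ) = ((1-γ : ℝ) : ℂ) := by
    norm_cast; exact Real.mul_self_sqrt (by linarith)
  have hs : ((Real.sqrt 2:ℂ))⁻¹ * ((Real.sqrt 2:ℂ))⁻¹ = (2:ℂ)⁻¹ := by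
    rw [← mul_inv]; norm_cast
    rw [Real.mul_self_sqrt (by norm_num)]; norm_num
  have h2 : ((Real.sqrt 2:ℂ))⁻¹ ^ 2 = (2:ℂ)⁻¹ := by rw [sq, hs]
  have hx2 : ((Real.sqrt γ:ℂ)) ^ 2 = (γ:ℂ) := by rw [sq, hx]
  have hy2 : ((Real.sqrt (1-γ):ℂ)) ^ 2 = ((1-γ:ℝ):ℂ) := by rw [sq, hy]
  have hx4 : ((Real.sqrt γ:ℂ)) ^ 4 = (γ:ℂ)^2 := by rw [show 4=2*2 from rfl, pow_mul, hx2]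
  have hy4 : ((Real.sqrt (1-γ):ℂ)) ^ 4 = ((1-γ:ℝ):ℂ)^2 := by
    rw [show 4=2*2 from rfl, pow_mul, hy2]
  ext ⟨i,j⟩ ⟨k,l⟩
  fin_cases i <;> fin_cases j <;> fin_cases k <;> fin_cases l <;>
  · simp [ampBoth, bellState, bellVec, ampKraus, dampedBell,
      Matrix.mul_apply, Matrix.kroneckerMap_apply, Fin.sum_univ_two,
      Matrix.conjTranspose_apply, Fintype.sum_prod_type, Prod.ext_iff]
    try ring_nf
    try simp [h2, hx2, hy2, hx4, hy4]
    try push_cast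
    try ring
lemma ampXProb_eq (γ : ℝ) (h0 : 0 ≤ γ) (h1 : γ ≤ 1) (a b : Fin 2) :
    ampXProb γ (a, b) = (1 + pmVal a * pmVal b * (1 - γ)) / 4 := by
  rw [ampXProb, ampBoth_bell γ h0 h1]
  fin_cases a <;> fin_cases b <;>
  · simp [dampedBell, xProj, pmVal, Matrix.trace, Matrix.mul_apply,
      Matrix.kroneckerMap_apply, Fin.sum_univ_two, Fintype.sum_prod_type,
      Matrix.diag, Prod.ext_iff]
    push_cast
    try ring_nf
    try simp [← Complex.ofReal_pow, Complex.add_re, Complex.ofReal_re]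
    try ring

lemma logb_two_two : Real.logb 2 2 = 1 := Real.logb_self_eq_one (by norm_num)

lemma logb_two_four : Real.logb 2 (4:ℝ) = 2 := by
  rw [show (4:ℝ) = 2*2 by norm_num, Real.logb_mul (by norm_num) (by norm_num),
    logb_two_two]; norm_num

lemma logb_quarter (x : ℝ) (hx : x ≠ 0) :
    Real.logb 2 (x/4) = Real.logb 2 x - 2 := by
  rw [Real.logb_div hx (by norm_num), logb_two_four]

/-- measuring both qubits of the amplitude-damped Bell state in the
`σ_x` eigenbasis: (i) the mutual information of the outcome distribution equals
`((2−γ)/2)·log₂(2−γ) + (γ/2)·log₂ γ`; (ii) the covariance of the `±1`-valued outcomes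
equals `1−γ`, indeed `tr((σ_x⊗σ_x)ρ') = 1−γ` and both single-qubit means vanish. -/
theorem amplitude_damped_bell_statistics (γ : ℝ) (hγ : γ ∈ Set.Icc (0 : ℝ) 1) :
    (shannon (fun a : Fin 2 => ∑ b : Fin 2, ampXProb γ (a, b))
        + shannon (fun b : Fin 2 => ∑ a : Fin 2, ampXProb γ (a, b))
        - shannon (ampXProb γ)
      = ((2 - γ) / 2) * Real.logb 2 (2 - γ) + (γ / 2) * Real.logb 2 γ) ∧
    ((pauliX ⊗ₖ pauliX) * ampBoth γ bellState).trace = ((1 - γ : ℝ) : ℂ) ∧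
    ((pauliX ⊗ₖ (1 : Matrix (Fin 2) (Fin 2) ℂ)) * ampBoth γ bellState).trace = 0 ∧
    (((1 : Matrix (Fin 2) (Fin 2) ℂ) ⊗ₖ pauliX) * ampBoth γ bellState).trace = 0 ∧
    (∑ x : Fin 2 × Fin 2, pmVal x.1 * pmVal x.2 * ampXProb γ x)
        - (∑ x : Fin 2 × Fin 2, pmVal x.1 * ampXProb γ x)
          * (∑ x : Fin 2 × Fin 2, pmVal x.2 * ampXProb γ x)
      = 1 - γ := by
  obtain ⟨h0, h1⟩ := hγ
  have hP : ∀ x : Fin 2 × Fin 2,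
      ampXProb γ x = (1 + pmVal x.1 * pmVal x.2 * (1 - γ)) / 4 := fun x =>
    ampXProb_eq γ h0 h1 x.1 x.2
  refine ⟨?_, ?_, ?_, ?_, ?_⟩
  · -- mutual information
    have hm : Real.logb 2 (1/2 : ℝ) = -1 := by
      rw [show (1/2:ℝ) = 2⁻¹ by norm_num, Real.logb_inv, logb_two_two]
    have hA : Real.logb 2 ((2-γ)/4) = Real.logb 2 (2-γ) - 2 :=
      logb_quarter _ (by intro h; linarith)
    have hB : (γ/4) * Real.logb 2 (γ/4) = (γ/4) * Real.logb 2 γ - γ/2 := by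
      rcases eq_or_lt_of_le h0 with h | h
      · rw [← h]; norm_num
      · rw [logb_quarter _ (ne_of_gt h)]; ring
    simp only [shannon, hP, Fintype.sum_prod_type, Fin.sum_univ_two, pmVal]
    norm_num
    rw [show (1+(1-γ))/4 = (2-γ)/4 by ring]
    rw [show γ/4 + (2-γ)/4 = 1/2 by ring, show (2-γ)/4 + γ/4 = 1/2 by ring,
      hm, hA]
    nlinarith [hB]
  · rw [ampBoth_bell γ h0 h1]
    simp [dampedBell, pauliX, Matrix.trace, Matrix.mul_apply,
      Matrix.kroneckerMap_apply, Fin.sum_univ_two, Fintype.sum_prod_type,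
      Matrix.diag, Prod.ext_iff]
    try push_cast
    try ring
  · rw [ampBoth_bell γ h0 h1]
    simp [dampedBell, pauliX, Matrix.trace, Matrix.mul_apply, Matrix.one_apply,
      Matrix.kroneckerMap_apply, Fin.sum_univ_two, Fintype.sum_prod_type,
      Matrix.diag, Prod.ext_iff]
  · rw [ampBoth_bell γ h0 h1]
    simp [dampedBell, pauliX, Matrix.trace, Matrix.mul_apply, Matrix.one_apply,
      Matrix.kroneckerMap_apply, Fin.sum_univ_two, Fintype.sum_prod_type,
      Matrix.diag, Prod.ext_iff]
  · simp only [hP, Fintype.sum_prod_type, Fin.sum_univ_two, pmVal]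
    norm_num
    ring

end
end

section
/- Consider two bipartitions of four qubits into parts A = {q₁, q₂} and B = {q₃, q₄}. (i) For the state ρ₁ = (I₂/2)_{q₁} ⊗ |Φ⟩⟨Φ|_{q₂q₃} ⊗ (I₂/2)_{q₄} (a Bell pair shared between A and B plus one maximally mixed qubit on each side), the measured mutual information across the bipartition is I_m(A;B) = 1. (ii) For the state ρ₂ = σ₂^{q₁q₃} ⊗ σ₂^{q₂q₄} (two copies of σ₂, each shared between A and B), the measured mutual information across the bipartition is I_m(A;B) = 2. Hence the two triangle networks, whose node pairs realize exactly these joint states, are distinguished by the measured mutual information even though every node in both networks has reduced-state von Neumann entropy 2. -/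
open scoped Kronecker Matrix Classical

noncomputable section

/-- The four-qubit state `(I₂/2)_{q₁} ⊗ |Φ⟩⟨Φ|_{q₂q₃} ⊗ (I₂/2)_{q₄}`, arranged as a
bipartite state over `A = {q₁,q₂}` and `B = {q₃,q₄}`. -/
def triangleRho1 :
    Matrix ((Fin 2 × Fin 2) × (Fin 2 × Fin 2)) ((Fin 2 × Fin 2) × (Fin 2 × Fin 2)) ℂ :=
  Matrix.of fun x y =>
    (if x.1.1 = y.1.1 then (1 : ℂ)/2 else 0) *
      bellState (x.1.2, x.2.1) (y.1.2, y.2.1) *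
      (if x.2.2 = y.2.2 then (1 : ℂ)/2 else 0)

/-- The four-qubit state `σ₂^{q₁q₃} ⊗ σ₂^{q₂q₄}`, arranged as a bipartite state over
`A = {q₁,q₂}` and `B = {q₃,q₄}`. -/
def triangleRho2 :
    Matrix ((Fin 2 × Fin 2) × (Fin 2 × Fin 2)) ((Fin 2 × Fin 2) × (Fin 2 × Fin 2)) ℂ :=
  Matrix.of fun x y =>
    sigma2 (x.1.1, x.2.1) (y.1.1, y.2.1) * sigma2 (x.1.2, x.2.2) (y.1.2, y.2.2)


/-! ### Auxiliary lemmas -/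

open scoped ComplexOrder

section Aux

lemma logb2 : Real.logb 2 (2:ℝ) = 1 := Real.logb_self_eq_one (by norm_num)

lemma logb4 : Real.logb 2 (4 : ℝ) = 2 := by
  rw [show (4:ℝ) = (2:ℝ)^(2:ℕ) by norm_num, Real.logb_pow, logb2]; norm_num

lemma logb_inv4 : Real.logb 2 (1/4 : ℝ) = -2 := by
  rw [show (1/4:ℝ) = ((4:ℝ))⁻¹ by norm_num, Real.logb_inv, logb4]

lemma logb_inv8 : Real.logb 2 (1/8 : ℝ) = -3 := by
  rw [show (1/8:ℝ) = ((8:ℝ))⁻¹ by norm_num, Real.logb_inv,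
    show (8:ℝ) = (2:ℝ)^(3:ℕ) by norm_num, Real.logb_pow, logb2]; norm_num

/-- The fundamental bound on classical mutual information. -/
lemma mi_le_logb {ι κ : Type*} [Fintype ι] [Fintype κ] (p : ι × κ → ℝ) (C : ℝ) (hC : 1 ≤ C)
    (hp : ∀ x, 0 ≤ p x) (hsum : ∑ x, p x = 1)
    (hbound : ∀ a b, p (a, b) ≤ C * ((∑ b', p (a, b')) * (∑ a', p (a', b)))) :
    shannon (fun a : ι => ∑ b, p (a, b)) + shannon (fun b : κ => ∑ a, p (a, b))
      - shannon p ≤ Real.logb 2 C := by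
  classical
  set pA : ι → ℝ := fun a => ∑ b, p (a, b) with hpA
  set pB : κ → ℝ := fun b => ∑ a, p (a, b) with hpB
  have e1 : shannon pA = -∑ a, ∑ b, p (a, b) * Real.logb 2 (pA a) := by
    simp only [shannon, hpA, Finset.sum_mul]
  have e2 : shannon pB = -∑ a, ∑ b, p (a, b) * Real.logb 2 (pB b) := by
    simp only [shannon, hpB, Finset.sum_mul]
    rw [Finset.sum_comm]
  have e3 : shannon p = -∑ a, ∑ b, p (a, b) * Real.logb 2 (p (a, b)) := by
    simp only [shannon, Fintype.sum_prod_type]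
  rw [e1, e2, e3]
  have step : ∀ a b, p (a, b) * Real.logb 2 (p (a, b)) - p (a, b) * Real.logb 2 (pA a)
      - p (a, b) * Real.logb 2 (pB b) ≤ p (a, b) * Real.logb 2 C := by
    intro a b
    rcases eq_or_lt_of_le (hp (a, b)) with h0 | hpos
    · simp [← h0]
    · have hA : 0 < pA a := lt_of_lt_of_le hpos
        (Finset.single_le_sum (fun i _ => hp (a, i)) (Finset.mem_univ b))
      have hB : 0 < pB b := lt_of_lt_of_le hpos
        (Finset.single_le_sum (fun i _ => hp (i, b)) (Finset.mem_univ a))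
      have hCpos : (0:ℝ) < C := lt_of_lt_of_le one_pos hC
      have hlog : Real.logb 2 (p (a, b)) ≤
          Real.logb 2 C + Real.logb 2 (pA a) + Real.logb 2 (pB b) := by
        have : Real.logb 2 (p (a, b)) ≤ Real.logb 2 (C * (pA a * pB b)) := by
          rw [Real.logb_le_logb (by norm_num) hpos (by positivity)]
          exact hbound a b
        rwa [Real.logb_mul (ne_of_gt hCpos) (by positivity),
          Real.logb_mul (ne_of_gt hA) (ne_of_gt hB), ← add_assoc] at this
      nlinarith [mul_le_mul_of_nonneg_left hlog (le_of_lt hpos)]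
  calc (-∑ a, ∑ b, p (a, b) * Real.logb 2 (pA a)) + (-∑ a, ∑ b, p (a, b) * Real.logb 2 (pB b))
        - (-∑ a, ∑ b, p (a, b) * Real.logb 2 (p (a, b)))
      = ∑ a, ∑ b, (p (a, b) * Real.logb 2 (p (a, b)) - p (a, b) * Real.logb 2 (pA a)
          - p (a, b) * Real.logb 2 (pB b)) := by
        simp only [Finset.sum_sub_distrib]; ring
    _ ≤ ∑ a, ∑ b, p (a, b) * Real.logb 2 C :=
        Finset.sum_le_sum fun a _ => Finset.sum_le_sum fun b _ => step a b
    _ = Real.logb 2 C := by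
        simp only [← Finset.sum_mul]
        rw [show (∑ i : ι, ∑ j : κ, p (i, j)) = ∑ x : ι × κ, p x from
          (Fintype.sum_prod_type _).symm, hsum, one_mul]

lemma two_mul_le_aux {r u v : ℝ} (hu : 0 ≤ u) (hv : 0 ≤ v) (h : r ^ 2 ≤ u * v) :
    2 * r ≤ u + v := by
  nlinarith [sq_nonneg (u - v), sq_nonneg (u + v - 2 * r)]

lemma psd_diag_re {d : Type*} [Fintype d] [DecidableEq d] {M : Matrix d d ℂ}
    (hM : M.PosSemidef) (i : d) : 0 ≤ (M i i).re := by
  have h := hM.re_dotProduct_nonneg (Pi.single i 1)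
  have e : dotProduct (star (Pi.single i 1)) (M.mulVec (Pi.single i (1:ℂ))) = M i i := by
    simp [dotProduct, Matrix.mulVec, Pi.single_apply, apply_ite (star : ℂ → ℂ),
      mul_ite, ite_mul, mul_zero, zero_mul, mul_one, one_mul,
      Finset.sum_ite_eq, Finset.sum_ite_eq']
  rwa [e] at h

lemma psd_diag_im {d : Type*} [Fintype d] {M : Matrix d d ℂ}
    (hM : M.PosSemidef) (i : d) : (M i i).im = 0 := by
  have h := hM.isHermitian.apply i i
  have := congrArg Complex.im h
  simp only [Complex.star_def, Complex.conj_im] at this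
  linarith

lemma psd_sum_diag_re_nonneg {d : Type*} [Fintype d] [DecidableEq d] {M : Matrix d d ℂ}
    (hM : M.PosSemidef) : 0 ≤ ∑ i, (M i i).re :=
  Finset.sum_nonneg fun i _ => psd_diag_re hM i

lemma psd2_offdiag (M : Matrix (Fin 2) (Fin 2) ℂ) (hM : M.PosSemidef) :
    M 1 0 = starRingEnd ℂ (M 0 1) := by
  have h := hM.isHermitian.apply 0 1
  rw [← h]; simp

lemma psd2_cs (M : Matrix (Fin 2) (Fin 2) ℂ) (hM : M.PosSemidef) :
    Complex.normSq (M 0 1) ≤ (M 0 0).re * (M 1 1).re := by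
  have hdet : 0 ≤ (M.det).re := by
    rw [hM.isHermitian.det_eq_prod_eigenvalues]
    rw [← RCLike.ofReal_prod]
    have h0 : (0:ℝ) ≤ ∏ i, hM.isHermitian.eigenvalues i :=
      Finset.prod_nonneg fun i _ => hM.eigenvalues_nonneg i
    simpa using h0
  rw [Matrix.det_fin_two, psd2_offdiag M hM] at hdet
  have h00 := psd_diag_im hM 0
  have h11 := psd_diag_im hM 1
  simp only [Complex.sub_re, Complex.mul_re, h00, h11, Complex.conj_re, Complex.conj_im,
    zero_mul, mul_zero, sub_zero] at hdet
  rw [Complex.normSq_apply]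
  nlinarith [hdet]

lemma psd2_sum_mul (M N : Matrix (Fin 2) (Fin 2) ℂ) (hM : M.PosSemidef) (hN : N.PosSemidef) :
    0 ≤ (∑ s, ∑ t, M s t * N s t).re ∧
    (∑ s, ∑ t, M s t * N s t).re ≤ ((M 0 0).re + (M 1 1).re) * ((N 0 0).re + (N 1 1).re) := by
  have hm0 := psd_diag_re hM 0
  have hm1 := psd_diag_re hM 1
  have hn0 := psd_diag_re hN 0
  have hn1 := psd_diag_re hN 1
  have him0 := psd_diag_im hM 0
  have him1 := psd_diag_im hM 1
  have hin0 := psd_diag_im hN 0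
  have hin1 := psd_diag_im hN 1
  have hsum : (∑ s, ∑ t, M s t * N s t).re
      = (M 0 0).re * (N 0 0).re + (M 1 1).re * (N 1 1).re + 2 * (M 0 1 * N 0 1).re := by
    rw [Fin.sum_univ_two, Fin.sum_univ_two, Fin.sum_univ_two, psd2_offdiag M hM,
      psd2_offdiag N hN]
    simp only [Complex.add_re, Complex.mul_re, Complex.conj_re, Complex.conj_im,
      him0, him1, hin0, hin1]
    ring
  have hr : ((M 0 1 * N 0 1).re) ^ 2 ≤ ((M 0 0).re * (M 1 1).re) * ((N 0 0).re * (N 1 1).re) := by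
    have h1 : ((M 0 1 * N 0 1).re) ^ 2 ≤ Complex.normSq (M 0 1 * N 0 1) := by
      nlinarith [Complex.normSq_nonneg (M 0 1 * N 0 1), sq_nonneg ((M 0 1 * N 0 1).im),
        Complex.normSq_apply (M 0 1 * N 0 1)]
    have h2 : Complex.normSq (M 0 1 * N 0 1) = Complex.normSq (M 0 1) * Complex.normSq (N 0 1) :=
      Complex.normSq_mul _ _
    calc ((M 0 1 * N 0 1).re) ^ 2 ≤ Complex.normSq (M 0 1) * Complex.normSq (N 0 1) := by
          rw [← h2]; exact h1
      _ ≤ ((M 0 0).re * (M 1 1).re) * ((N 0 0).re * (N 1 1).re) :=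
          mul_le_mul (psd2_cs M hM) (psd2_cs N hN) (Complex.normSq_nonneg _)
            (mul_nonneg hm0 hm1)
  constructor
  · rw [hsum]
    have := two_mul_le_aux (mul_nonneg hm0 hn0) (mul_nonneg hm1 hn1)
      (r := -(M 0 1 * N 0 1).re) (by rw [show (-(M 0 1 * N 0 1).re) ^ 2
        = ((M 0 1 * N 0 1).re) ^ 2 by ring]; nlinarith [hr])
    linarith
  · rw [hsum]
    have := two_mul_le_aux (mul_nonneg hm0 hn1) (mul_nonneg hm1 hn0)
      (r := (M 0 1 * N 0 1).re) (by nlinarith [hr, sq_nonneg ((M 0 1 * N 0 1).re)])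
    nlinarith

lemma pvm_psd {ι d : Type*} [Fintype d] [DecidableEq d] (P : PVM ι d) (a : ι) :
    (P.proj a).PosSemidef := by
  have h := Matrix.posSemidef_conjTranspose_mul_self (P.proj a)
  rwa [P.herm a, P.idem a] at h

lemma ptraceL_posSemidef {dA dB : Type*} [Fintype dA] [Fintype dB] [DecidableEq dA]
    {ρ : Matrix (dA × dB) (dA × dB) ℂ} (h : ρ.PosSemidef) : (ptraceL ρ).PosSemidef := by
  refine Matrix.PosSemidef.of_dotProduct_mulVec_nonneg ?_ ?_
  · ext b b'
    simp only [Matrix.conjTranspose_apply, ptraceL, Matrix.of_apply, star_sum]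
    exact Finset.sum_congr rfl fun a _ => h.isHermitian.apply (a, b) (a, b')
  · intro x
    have key : dotProduct (star x) ((ptraceL ρ).mulVec x)
        = ∑ a : dA, dotProduct (star (fun p : dA × dB => if p.1 = a then x p.2 else 0))
            (ρ.mulVec (fun p : dA × dB => if p.1 = a then x p.2 else 0)) := by
      simp only [dotProduct, Matrix.mulVec, ptraceL, Matrix.of_apply, Pi.star_apply,
        Fintype.sum_prod_type_right, apply_ite (star : ℂ → ℂ), star_zero, mul_ite, ite_mul,
        mul_zero, zero_mul, Finset.sum_ite_eq', Finset.mem_univ, if_true,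
        Finset.sum_mul, Finset.mul_sum]
      conv_rhs => enter [2, x1, 2, x2]; rw [Finset.sum_comm]
      simp only [Finset.sum_ite_eq', Finset.mem_univ, if_true]
      calc ∑ b : dB, ∑ b' : dB, ∑ a : dA, star (x b) * (ρ (a, b) (a, b') * x b')
          = ∑ b : dB, ∑ a : dA, ∑ b' : dB, star (x b) * (ρ (a, b) (a, b') * x b') :=
            Finset.sum_congr rfl fun b _ => Finset.sum_comm
        _ = ∑ a : dA, ∑ b : dB, ∑ b' : dB, star (x b) * (ρ (a, b) (a, b') * x b') :=
            Finset.sum_comm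
    rw [key]
    exact Finset.sum_nonneg fun a _ => h.dotProduct_mulVec_nonneg _

lemma ptraceR_posSemidef {dA dB : Type*} [Fintype dA] [Fintype dB] [DecidableEq dB]
    {ρ : Matrix (dA × dB) (dA × dB) ℂ} (h : ρ.PosSemidef) : (ptraceR ρ).PosSemidef := by
  refine Matrix.PosSemidef.of_dotProduct_mulVec_nonneg ?_ ?_
  · ext b b'
    simp only [Matrix.conjTranspose_apply, ptraceR, Matrix.of_apply, star_sum]
    exact Finset.sum_congr rfl fun a _ => h.isHermitian.apply (b, a) (b', a)
  · intro x
    have key : dotProduct (star x) ((ptraceR ρ).mulVec x)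
        = ∑ a : dB, dotProduct (star (fun p : dA × dB => if p.2 = a then x p.1 else 0))
            (ρ.mulVec (fun p : dA × dB => if p.2 = a then x p.1 else 0)) := by
      simp only [dotProduct, Matrix.mulVec, ptraceR, Matrix.of_apply, Pi.star_apply,
        Fintype.sum_prod_type, apply_ite (star : ℂ → ℂ), star_zero, mul_ite, ite_mul,
        mul_zero, zero_mul, Finset.sum_ite_eq', Finset.mem_univ, if_true,
        Finset.sum_mul, Finset.mul_sum]
      conv_rhs => enter [2, x1, 2, x2]; rw [Finset.sum_comm]
      simp only [Finset.sum_ite_eq', Finset.mem_univ, if_true]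
      calc ∑ c : dA, ∑ c' : dA, ∑ b : dB, star (x c) * (ρ (c, b) (c', b) * x c')
          = ∑ c : dA, ∑ b : dB, ∑ c' : dA, star (x c) * (ρ (c, b) (c', b) * x c') :=
            Finset.sum_congr rfl fun c _ => Finset.sum_comm
        _ = ∑ b : dB, ∑ c : dA, ∑ c' : dA, star (x c) * (ρ (c, b) (c', b) * x c') :=
            Finset.sum_comm
    rw [key]
    exact Finset.sum_nonneg fun a _ => h.dotProduct_mulVec_nonneg _

lemma bellState_apply (u v : Fin 2 × Fin 2) :
    bellState u v = if u.1 = u.2 ∧ v.1 = v.2 then (1/2 : ℂ) else 0 := by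
  have hs : ((Real.sqrt 2 : ℝ) : ℂ)⁻¹ * ((Real.sqrt 2 : ℝ) : ℂ)⁻¹ = (2:ℂ)⁻¹ := by
    rw [← Complex.ofReal_inv, ← Complex.ofReal_mul, ← mul_inv,
      Real.mul_self_sqrt (by norm_num : (0:ℝ) ≤ 2)]
    norm_num
  simp only [bellState, bellVec, Matrix.of_apply]
  by_cases h1 : u.1 = u.2 <;> by_cases h2 : v.1 = v.2 <;> simp [h1, h2, hs]

lemma trace_mul_expand {d : Type*} [Fintype d] (A B : Matrix d d ℂ) :
    (A * B).trace = ∑ x, ∑ y, A x y * B y x := by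
  simp [Matrix.trace, Matrix.diag, Matrix.mul_apply]

end Aux


lemma sum_ite_const {α β : Type*} [Fintype α] [AddCommMonoid β] (p : Prop) [Decidable p]
    (f : α → β) : (∑ x, if p then f x else 0) = if p then ∑ x, f x else 0 := by
  split_ifs <;> simp

lemma rho1_entry (y x : (Fin 2 × Fin 2) × (Fin 2 × Fin 2)) :
    triangleRho1 y x = if y.1.1 = x.1.1 then (if y.1.2 = y.2.1 then (if x.1.2 = x.2.1 then
      (if y.2.2 = x.2.2 then (1/8 : ℂ) else 0) else 0) else 0) else 0 := by
  simp only [triangleRho1, Matrix.of_apply, bellState_apply]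
  by_cases h1 : y.1.1 = x.1.1 <;> by_cases h2 : y.1.2 = y.2.1 <;>
    by_cases h3 : x.1.2 = x.2.1 <;> by_cases h4 : y.2.2 = x.2.2 <;>
    simp [h1, h2, h3, h4] <;> norm_num

lemma rho1_prob {ιA ιB : Type} (P : PVM ιA (Fin 2 × Fin 2)) (Q : PVM ιB (Fin 2 × Fin 2))
    (a : ιA) (b : ιB) :
    ((P.proj a ⊗ₖ Q.proj b) * triangleRho1).trace
      = (1/8 : ℂ) * ∑ s : Fin 2, ∑ t : Fin 2,
          ptraceL (P.proj a) s t * ptraceR (Q.proj b) s t := by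
  rw [trace_mul_expand]
  simp only [rho1_entry, Matrix.kroneckerMap_apply, Fintype.sum_prod_type,
    mul_ite, ite_mul, mul_zero, zero_mul, sum_ite_const, Finset.sum_const_zero,
    Finset.sum_ite_eq, Finset.sum_ite_eq', Finset.mem_univ, if_true]
  calc (∑ x1 : Fin 2, ∑ s : Fin 2, ∑ w : Fin 2, ∑ t : Fin 2,
        P.proj a (x1, s) (x1, t) * Q.proj b (s, w) (t, w) * (1/8 : ℂ))
      = ∑ x1 : Fin 2, ∑ s : Fin 2, ∑ t : Fin 2, ∑ w : Fin 2,
          P.proj a (x1, s) (x1, t) * Q.proj b (s, w) (t, w) * (1/8 : ℂ) :=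
        Finset.sum_congr rfl fun _ _ => Finset.sum_congr rfl fun _ _ => Finset.sum_comm
    _ = ∑ s : Fin 2, ∑ x1 : Fin 2, ∑ t : Fin 2, ∑ w : Fin 2,
          P.proj a (x1, s) (x1, t) * Q.proj b (s, w) (t, w) * (1/8 : ℂ) := Finset.sum_comm
    _ = ∑ s : Fin 2, ∑ t : Fin 2, ∑ x1 : Fin 2, ∑ w : Fin 2,
          P.proj a (x1, s) (x1, t) * Q.proj b (s, w) (t, w) * (1/8 : ℂ) :=
        Finset.sum_congr rfl fun _ _ => Finset.sum_comm
    _ = ∑ s : Fin 2, ∑ t : Fin 2, ∑ w : Fin 2, ∑ x1 : Fin 2,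
          P.proj a (x1, s) (x1, t) * Q.proj b (s, w) (t, w) * (1/8 : ℂ) :=
        Finset.sum_congr rfl fun _ _ => Finset.sum_congr rfl fun _ _ => Finset.sum_comm
    _ = (1/8 : ℂ) * ∑ s : Fin 2, ∑ t : Fin 2,
          ptraceL (P.proj a) s t * ptraceR (Q.proj b) s t := by
        simp only [ptraceL, ptraceR, Matrix.of_apply, Finset.sum_mul, Finset.mul_sum]
        refine Finset.sum_congr rfl fun s _ => Finset.sum_congr rfl fun t _ =>
          Finset.sum_congr rfl fun u _ => Finset.sum_congr rfl fun v _ => ?_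
        ring

lemma rho2_entry (y x : (Fin 2 × Fin 2) × (Fin 2 × Fin 2)) :
    triangleRho2 y x = if y.1.1 = x.1.1 then (if y.1.2 = x.1.2 then (if y.2.1 = x.2.1 then
      (if y.2.2 = x.2.2 then (if x.1.1 = x.2.1 then (if x.1.2 = x.2.2 then (1/4 : ℂ) else 0)
        else 0) else 0) else 0) else 0) else 0 := by
  simp only [triangleRho2, sigma2, Matrix.of_apply, Prod.mk.injEq]
  by_cases h1 : y.1.1 = x.1.1 <;> by_cases h2 : y.1.2 = x.1.2 <;>
    by_cases h3 : y.2.1 = x.2.1 <;> by_cases h4 : y.2.2 = x.2.2 <;>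
    by_cases h5 : x.1.1 = x.2.1 <;> by_cases h6 : x.1.2 = x.2.2 <;>
    simp [h1, h2, h3, h4, h5, h6] <;> (try split_ifs <;> simp_all) <;> norm_num

lemma rho2_prob {ιA ιB : Type} (P : PVM ιA (Fin 2 × Fin 2)) (Q : PVM ιB (Fin 2 × Fin 2))
    (a : ιA) (b : ιB) :
    ((P.proj a ⊗ₖ Q.proj b) * triangleRho2).trace
      = (1/4 : ℂ) * ∑ c : Fin 2 × Fin 2, P.proj a c c * Q.proj b c c := by
  rw [trace_mul_expand]
  simp only [rho2_entry, Matrix.kroneckerMap_apply, Fintype.sum_prod_type,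
    mul_ite, ite_mul, mul_zero, zero_mul, sum_ite_const, Finset.sum_const_zero,
    Finset.sum_ite_eq, Finset.sum_ite_eq', Finset.mem_univ, if_true, Finset.mul_sum]
  refine Finset.sum_congr rfl fun s _ => Finset.sum_congr rfl fun t _ => ?_
  ring

lemma comp_joint {dA dB : Type*} [Fintype dA] [DecidableEq dA] [Fintype dB] [DecidableEq dB]
    (ρ : Matrix (dA × dB) (dA × dB) ℂ) (x : dA) (w : dB) :
    (((compPVM dA).proj x ⊗ₖ (compPVM dB).proj w) * ρ).trace = ρ (x, w) (x, w) := by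
  rw [trace_mul_expand]
  simp only [compPVM, Matrix.diagonal_apply, Matrix.kroneckerMap_apply, Fintype.sum_prod_type,
    mul_ite, ite_mul, mul_zero, zero_mul, one_mul, mul_one, sum_ite_const,
    Finset.sum_const_zero, Finset.sum_ite_eq, Finset.sum_ite_eq', Finset.mem_univ, if_true]


lemma sum_ptraceL_proj {ι : Type*} [inst : Fintype ι] (P : PVM ι (Fin 2 × Fin 2)) (s t : Fin 2) :
    (∑ a, ptraceL (P.proj a) s t) = if s = t then 2 else 0 := by
  simp only [ptraceL, Matrix.of_apply]
  rw [Finset.sum_comm]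
  have h1 : ∀ x1 : Fin 2, (∑ a, P.proj a (x1, s) (x1, t)) = if s = t then (1:ℂ) else 0 := by
    intro x1
    have hc : (∑ a : ι, P.proj a) = 1 := by
      rw [Subsingleton.elim inst P.fintype]; exact P.complete
    have h := congrFun (congrFun hc (x1, s)) (x1, t)
    rw [Matrix.sum_apply] at h
    rw [h, Matrix.one_apply]
    by_cases hst : s = t <;> simp [hst, Prod.ext_iff]
  simp only [h1]
  by_cases hst : s = t <;> simp [hst]

lemma sum_ptraceR_proj {ι : Type*} [inst : Fintype ι] (Q : PVM ι (Fin 2 × Fin 2)) (s t : Fin 2) :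
    (∑ b, ptraceR (Q.proj b) s t) = if s = t then 2 else 0 := by
  simp only [ptraceR, Matrix.of_apply]
  rw [Finset.sum_comm]
  have h1 : ∀ x4 : Fin 2, (∑ b, Q.proj b (s, x4) (t, x4)) = if s = t then (1:ℂ) else 0 := by
    intro x4
    have hc : (∑ b : ι, Q.proj b) = 1 := by
      rw [Subsingleton.elim inst Q.fintype]; exact Q.complete
    have h := congrFun (congrFun hc (s, x4)) (t, x4)
    rw [Matrix.sum_apply] at h
    rw [h, Matrix.one_apply]
    by_cases hst : s = t <;> simp [hst, Prod.ext_iff]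
  simp only [h1]
  by_cases hst : s = t <;> simp [hst]

lemma sum_diag_proj {ι d : Type*} [inst : Fintype ι] [Fintype d] [DecidableEq d]
    (P : PVM ι d) (c : d) : (∑ a, P.proj a c c) = 1 := by
  have hc : (∑ a : ι, P.proj a) = 1 := by
    rw [Subsingleton.elim inst P.fintype]; exact P.complete
  have h := congrFun (congrFun hc c) c
  rw [Matrix.sum_apply] at h
  rw [h, Matrix.one_apply_eq]

lemma jointProb_rho1 {ιA ιB : Type} (P : PVM ιA (Fin 2 × Fin 2)) (Q : PVM ιB (Fin 2 × Fin 2))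
    (a : ιA) (b : ιB) :
    jointProb P Q triangleRho1 (a, b)
      = (1/8) * (∑ s, ∑ t, ptraceL (P.proj a) s t * ptraceR (Q.proj b) s t).re := by
  show ((P.proj a ⊗ₖ Q.proj b) * triangleRho1).trace.re = _
  rw [rho1_prob, Complex.mul_re]
  norm_num

lemma jointProb_rho1_nonneg {ιA ιB : Type} (P : PVM ιA (Fin 2 × Fin 2))
    (Q : PVM ιB (Fin 2 × Fin 2)) (x : ιA × ιB) : 0 ≤ jointProb P Q triangleRho1 x := by
  obtain ⟨a, b⟩ := x
  rw [jointProb_rho1]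
  have h := (psd2_sum_mul _ _ (ptraceL_posSemidef (pvm_psd P a))
    (ptraceR_posSemidef (pvm_psd Q b))).1
  linarith

lemma margA_rho1 {ιA ιB : Type} [Fintype ιB] (P : PVM ιA (Fin 2 × Fin 2))
    (Q : PVM ιB (Fin 2 × Fin 2)) (a : ιA) :
    (∑ b, jointProb P Q triangleRho1 (a, b))
      = (1/4) * ((ptraceL (P.proj a) 0 0).re + (ptraceL (P.proj a) 1 1).re) := by
  simp only [jointProb_rho1]
  rw [← Finset.mul_sum, ← Complex.re_sum]
  have swap : (∑ b, ∑ s, ∑ t, ptraceL (P.proj a) s t * ptraceR (Q.proj b) s t)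
      = ∑ s : Fin 2, ∑ t : Fin 2, ptraceL (P.proj a) s t * (if s = t then (2:ℂ) else 0) := by
    rw [Finset.sum_comm]
    refine Finset.sum_congr rfl fun s _ => ?_
    rw [Finset.sum_comm]
    refine Finset.sum_congr rfl fun t _ => ?_
    rw [← Finset.mul_sum, sum_ptraceR_proj Q s t]
  rw [swap]
  rw [Fin.sum_univ_two, Fin.sum_univ_two, Fin.sum_univ_two]
  norm_num
  ring

lemma margB_rho1 {ιA ιB : Type} [Fintype ιA] (P : PVM ιA (Fin 2 × Fin 2))
    (Q : PVM ιB (Fin 2 × Fin 2)) (b : ιB) :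
    (∑ a, jointProb P Q triangleRho1 (a, b))
      = (1/4) * ((ptraceR (Q.proj b) 0 0).re + (ptraceR (Q.proj b) 1 1).re) := by
  simp only [jointProb_rho1]
  rw [← Finset.mul_sum, ← Complex.re_sum]
  have swap : (∑ a, ∑ s, ∑ t, ptraceL (P.proj a) s t * ptraceR (Q.proj b) s t)
      = ∑ s : Fin 2, ∑ t : Fin 2, (if s = t then (2:ℂ) else 0) * ptraceR (Q.proj b) s t := by
    rw [Finset.sum_comm]
    refine Finset.sum_congr rfl fun s _ => ?_
    rw [Finset.sum_comm]
    refine Finset.sum_congr rfl fun t _ => ?_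
    rw [← Finset.sum_mul, sum_ptraceL_proj P s t]
  rw [swap]
  rw [Fin.sum_univ_two, Fin.sum_univ_two, Fin.sum_univ_two]
  norm_num
  ring

lemma hsum_rho1 {ιA ιB : Type} [Fintype ιA] [Fintype ιB] (P : PVM ιA (Fin 2 × Fin 2))
    (Q : PVM ιB (Fin 2 × Fin 2)) :
    ∑ x : ιA × ιB, jointProb P Q triangleRho1 x = 1 := by
  rw [Fintype.sum_prod_type]
  simp only [margA_rho1 P Q]
  rw [← Finset.mul_sum, Finset.sum_add_distrib, ← Complex.re_sum, ← Complex.re_sum,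
    sum_ptraceL_proj P 0 0, sum_ptraceL_proj P 1 1]
  norm_num

lemma miOf_rho1_le {ιA ιB : Type} (P : PVM ιA (Fin 2 × Fin 2))
    (Q : PVM ιB (Fin 2 × Fin 2)) : miOf P Q triangleRho1 ≤ 1 := by
  letI := P.fintype; letI := Q.fintype
  have h := mi_le_logb (jointProb P Q triangleRho1) 2 one_le_two
    (jointProb_rho1_nonneg P Q) (hsum_rho1 P Q) ?_
  · rw [logb2] at h
    exact h
  · intro a b
    have hfac : (∑ b', jointProb P Q triangleRho1 (a, b')) = (1/4) *
        ((ptraceL (P.proj a) 0 0).re + (ptraceL (P.proj a) 1 1).re) := margA_rho1 P Q a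
    have hfac' : (∑ a', jointProb P Q triangleRho1 (a', b)) = (1/4) *
        ((ptraceR (Q.proj b) 0 0).re + (ptraceR (Q.proj b) 1 1).re) := margB_rho1 P Q b
    rw [jointProb_rho1, hfac, hfac']
    have h2 := (psd2_sum_mul _ _ (ptraceL_posSemidef (pvm_psd P a))
      (ptraceR_posSemidef (pvm_psd Q b))).2
    nlinarith [h2]

lemma jointProb_rho2 {ιA ιB : Type} (P : PVM ιA (Fin 2 × Fin 2)) (Q : PVM ιB (Fin 2 × Fin 2))
    (a : ιA) (b : ιB) :
    jointProb P Q triangleRho2 (a, b)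
      = (1/4) * ∑ c : Fin 2 × Fin 2, (P.proj a c c).re * (Q.proj b c c).re := by
  show ((P.proj a ⊗ₖ Q.proj b) * triangleRho2).trace.re = _
  rw [rho2_prob, Complex.mul_re]
  have hre : ∀ c : Fin 2 × Fin 2, (P.proj a c c * Q.proj b c c).re
      = (P.proj a c c).re * (Q.proj b c c).re := by
    intro c
    rw [Complex.mul_re, psd_diag_im (pvm_psd P a) c, psd_diag_im (pvm_psd Q b) c]
    ring
  rw [Complex.re_sum]
  simp only [hre]
  norm_num

lemma jointProb_rho2_nonneg {ιA ιB : Type} (P : PVM ιA (Fin 2 × Fin 2))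
    (Q : PVM ιB (Fin 2 × Fin 2)) (x : ιA × ιB) : 0 ≤ jointProb P Q triangleRho2 x := by
  obtain ⟨a, b⟩ := x
  rw [jointProb_rho2]
  have : 0 ≤ ∑ c : Fin 2 × Fin 2, (P.proj a c c).re * (Q.proj b c c).re :=
    Finset.sum_nonneg fun c _ =>
      mul_nonneg (psd_diag_re (pvm_psd P a) c) (psd_diag_re (pvm_psd Q b) c)
  linarith

lemma margA_rho2 {ιA ιB : Type} [Fintype ιB] (P : PVM ιA (Fin 2 × Fin 2))
    (Q : PVM ιB (Fin 2 × Fin 2)) (a : ιA) :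
    (∑ b, jointProb P Q triangleRho2 (a, b))
      = (1/4) * ∑ c : Fin 2 × Fin 2, (P.proj a c c).re := by
  simp only [jointProb_rho2]
  rw [← Finset.mul_sum, Finset.sum_comm]
  congr 1
  refine Finset.sum_congr rfl fun c _ => ?_
  rw [← Finset.mul_sum, ← Complex.re_sum, sum_diag_proj Q c]
  simp

lemma margB_rho2 {ιA ιB : Type} [Fintype ιA] (P : PVM ιA (Fin 2 × Fin 2))
    (Q : PVM ιB (Fin 2 × Fin 2)) (b : ιB) :
    (∑ a, jointProb P Q triangleRho2 (a, b))
      = (1/4) * ∑ c : Fin 2 × Fin 2, (Q.proj b c c).re := by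
  simp only [jointProb_rho2]
  rw [← Finset.mul_sum, Finset.sum_comm]
  congr 1
  refine Finset.sum_congr rfl fun c _ => ?_
  rw [← Finset.sum_mul, ← Complex.re_sum, sum_diag_proj P c]
  simp

lemma hsum_rho2 {ιA ιB : Type} [Fintype ιA] [Fintype ιB] (P : PVM ιA (Fin 2 × Fin 2))
    (Q : PVM ιB (Fin 2 × Fin 2)) :
    ∑ x : ιA × ιB, jointProb P Q triangleRho2 x = 1 := by
  rw [Fintype.sum_prod_type]
  simp only [margA_rho2 P Q]
  rw [← Finset.mul_sum, Finset.sum_comm]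
  have : ∀ c : Fin 2 × Fin 2, (∑ a, (P.proj a c c).re) = 1 := by
    intro c
    rw [← Complex.re_sum, sum_diag_proj P c]
    simp
  simp only [this]
  simp

lemma miOf_rho2_le {ιA ιB : Type} (P : PVM ιA (Fin 2 × Fin 2))
    (Q : PVM ιB (Fin 2 × Fin 2)) : miOf P Q triangleRho2 ≤ 2 := by
  letI := P.fintype; letI := Q.fintype
  have h := mi_le_logb (jointProb P Q triangleRho2) 4 (by norm_num)
    (jointProb_rho2_nonneg P Q) (hsum_rho2 P Q) ?_
  · rw [logb4] at h
    exact h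
  · intro a b
    rw [jointProb_rho2, margA_rho2 P Q a, margB_rho2 P Q b]
    have hd : ∀ c, 0 ≤ (P.proj a c c).re := psd_diag_re (pvm_psd P a)
    have he : ∀ c, 0 ≤ (Q.proj b c c).re := psd_diag_re (pvm_psd Q b)
    have key : (∑ c : Fin 2 × Fin 2, (P.proj a c c).re * (Q.proj b c c).re)
        ≤ (∑ c : Fin 2 × Fin 2, (P.proj a c c).re) * (∑ c : Fin 2 × Fin 2, (Q.proj b c c).re) := by
      calc (∑ c : Fin 2 × Fin 2, (P.proj a c c).re * (Q.proj b c c).re)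
          ≤ ∑ c : Fin 2 × Fin 2, (P.proj a c c).re * (∑ c' : Fin 2 × Fin 2, (Q.proj b c' c').re) :=
            Finset.sum_le_sum fun c _ => mul_le_mul_of_nonneg_left
              (Finset.single_le_sum (fun c' _ => he c') (Finset.mem_univ c)) (hd c)
        _ = _ := by rw [← Finset.sum_mul]
    nlinarith [key]


lemma comp_jointProb_rho1 (x w : Fin 2 × Fin 2) :
    jointProb (compPVM (Fin 2 × Fin 2)) (compPVM (Fin 2 × Fin 2)) triangleRho1 (x, w)
      = if x.2 = w.1 then (1/8 : ℝ) else 0 := by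
  show (((compPVM (Fin 2 × Fin 2)).proj x ⊗ₖ (compPVM (Fin 2 × Fin 2)).proj w)
      * triangleRho1).trace.re = _
  rw [comp_joint, rho1_entry]
  by_cases h : x.2 = w.1 <;> simp [h]

lemma comp_jointProb_rho2 (x w : Fin 2 × Fin 2) :
    jointProb (compPVM (Fin 2 × Fin 2)) (compPVM (Fin 2 × Fin 2)) triangleRho2 (x, w)
      = if x = w then (1/4 : ℝ) else 0 := by
  show (((compPVM (Fin 2 × Fin 2)).proj x ⊗ₖ (compPVM (Fin 2 × Fin 2)).proj w)
      * triangleRho2).trace.re = _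
  rw [comp_joint, rho2_entry]
  by_cases h1 : x.1 = w.1 <;> by_cases h2 : x.2 = w.2 <;>
    simp [h1, h2, Prod.ext_iff]

lemma miOf_comp_rho1 :
    miOf (compPVM (Fin 2 × Fin 2)) (compPVM (Fin 2 × Fin 2)) triangleRho1 = 1 := by
  have hJ : ∀ ab : (Fin 2 × Fin 2) × (Fin 2 × Fin 2),
      jointProb (compPVM (Fin 2 × Fin 2)) (compPVM (Fin 2 × Fin 2)) triangleRho1 ab
        = if ab.1.2 = ab.2.1 then (1/8 : ℝ) else 0 := fun ab => comp_jointProb_rho1 ab.1 ab.2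
  show shannon _ + shannon _ - shannon _ = 1
  simp only [hJ, shannon, Fintype.sum_prod_type, Fin.sum_univ_two]
  unfold compPVM
  simp only [Fintype.sum_prod_type, Fin.sum_univ_two]
  norm_num [logb_inv4, logb_inv8]

lemma miOf_comp_rho2 :
    miOf (compPVM (Fin 2 × Fin 2)) (compPVM (Fin 2 × Fin 2)) triangleRho2 = 2 := by
  have hJ : ∀ ab : (Fin 2 × Fin 2) × (Fin 2 × Fin 2),
      jointProb (compPVM (Fin 2 × Fin 2)) (compPVM (Fin 2 × Fin 2)) triangleRho2 ab
        = if ab.1 = ab.2 then (1/4 : ℝ) else 0 := fun ab => comp_jointProb_rho2 ab.1 ab.2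
  show shannon _ + shannon _ - shannon _ = 2
  simp only [hJ, shannon, Fintype.sum_prod_type, Fin.sum_univ_two, Prod.mk.injEq]
  norm_num [logb_inv4]
  unfold compPVM
  norm_num


lemma smul_one_herm {d : Type*} [Fintype d] [DecidableEq d] (c : ℝ) :
    (((c : ℂ)) • (1 : Matrix d d ℂ)).IsHermitian := by
  unfold Matrix.IsHermitian
  rw [Matrix.conjTranspose_smul, Matrix.conjTranspose_one]
  congr 1
  simp [Complex.star_def, Complex.conj_ofReal]

lemma eig_smul_one {d : Type*} [Fintype d] [DecidableEq d] (c : ℝ)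
    (h : (((c : ℂ)) • (1 : Matrix d d ℂ)).IsHermitian) (k : d) : h.eigenvalues k = c := by
  have hd := h.conjStarAlgAut_star_eigenvectorUnitary
  rw [map_smul, map_one] at hd
  have hk := congrFun (congrFun hd.symm k) k
  rw [Matrix.diagonal_apply_eq, Matrix.smul_apply, Matrix.one_apply_eq] at hk
  have : ((h.eigenvalues k : ℝ) : ℂ) = (c : ℂ) := by
    simpa [smul_eq_mul] using hk
  exact_mod_cast this

lemma vnEntropy_quarter :
    vnEntropy ((((1:ℝ)/4 : ℝ) : ℂ) • (1 : Matrix (Fin 2 × Fin 2) (Fin 2 × Fin 2) ℂ)) = 2 := by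
  have h := smul_one_herm (d := Fin 2 × Fin 2) ((1:ℝ)/4)
  unfold vnEntropy
  rw [dif_pos h]
  simp only [eig_smul_one ((1:ℝ)/4) h]
  rw [Finset.sum_const, Finset.card_univ]
  norm_num [logb_inv4]

lemma ptraceR_rho1 : ptraceR triangleRho1
    = (((1:ℝ)/4 : ℝ) : ℂ) • (1 : Matrix (Fin 2 × Fin 2) (Fin 2 × Fin 2) ℂ) := by
  ext x y
  simp only [ptraceR, Matrix.of_apply, rho1_entry, Fintype.sum_prod_type,
    mul_ite, ite_mul, mul_zero, zero_mul, sum_ite_const, Finset.sum_const_zero,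
    Finset.sum_ite_eq, Finset.sum_ite_eq', Finset.mem_univ, if_true,
    Matrix.smul_apply, Matrix.one_apply, smul_eq_mul]
  by_cases h1 : x.1 = y.1 <;> by_cases h2 : x.2 = y.2 <;>
    simp [h1, h2, Prod.ext_iff, Fin.sum_univ_two, eq_comm] <;> norm_num <;> simp_all <;> norm_num

lemma ptraceL_rho1 : ptraceL triangleRho1
    = (((1:ℝ)/4 : ℝ) : ℂ) • (1 : Matrix (Fin 2 × Fin 2) (Fin 2 × Fin 2) ℂ) := by
  ext x y
  simp only [ptraceL, Matrix.of_apply, rho1_entry, Fintype.sum_prod_type,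
    mul_ite, ite_mul, mul_zero, zero_mul, sum_ite_const, Finset.sum_const_zero,
    Finset.sum_ite_eq, Finset.sum_ite_eq', Finset.mem_univ, if_true,
    Matrix.smul_apply, Matrix.one_apply, smul_eq_mul]
  by_cases h1 : x.1 = y.1 <;> by_cases h2 : x.2 = y.2 <;>
    simp [h1, h2, Prod.ext_iff, Fin.sum_univ_two, eq_comm] <;> norm_num <;> simp_all <;> norm_num

lemma ptraceR_rho2 : ptraceR triangleRho2
    = (((1:ℝ)/4 : ℝ) : ℂ) • (1 : Matrix (Fin 2 × Fin 2) (Fin 2 × Fin 2) ℂ) := by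
  ext x y
  simp only [ptraceR, Matrix.of_apply, rho2_entry, Fintype.sum_prod_type,
    mul_ite, ite_mul, mul_zero, zero_mul, sum_ite_const, Finset.sum_const_zero,
    Finset.sum_ite_eq, Finset.sum_ite_eq', Finset.mem_univ, if_true,
    Matrix.smul_apply, Matrix.one_apply, smul_eq_mul]
  by_cases h1 : x.1 = y.1 <;> by_cases h2 : x.2 = y.2 <;>
    simp [h1, h2, Prod.ext_iff, Fin.sum_univ_two] <;> norm_num <;> simp_all <;> norm_num

lemma ptraceL_rho2 : ptraceL triangleRho2
    = (((1:ℝ)/4 : ℝ) : ℂ) • (1 : Matrix (Fin 2 × Fin 2) (Fin 2 × Fin 2) ℂ) := by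
  ext x y
  simp only [ptraceL, Matrix.of_apply, rho2_entry, Fintype.sum_prod_type,
    mul_ite, ite_mul, mul_zero, zero_mul, sum_ite_const, Finset.sum_const_zero,
    Finset.sum_ite_eq, Finset.sum_ite_eq', Finset.mem_univ, if_true,
    Matrix.smul_apply, Matrix.one_apply, smul_eq_mul]
  by_cases h1 : x.1 = y.1 <;> by_cases h2 : x.2 = y.2 <;>
    simp [h1, h2, Prod.ext_iff, Fin.sum_univ_two] <;> norm_num <;> simp_all <;> norm_num

/-- across the bipartition, `I_m(A;B) = 1` for the first triangle
network state and `I_m(A;B) = 2` for the second, even though in both states each side of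
the bipartition has reduced-state von Neumann entropy `2`. -/
theorem triangle_networks_distinguished_by_measuredMI :
    measuredMI triangleRho1 = 1 ∧
    measuredMI triangleRho2 = 2 ∧
    vnEntropy (ptraceR triangleRho1) = 2 ∧
    vnEntropy (ptraceL triangleRho1) = 2 ∧
    vnEntropy (ptraceR triangleRho2) = 2 ∧
    vnEntropy (ptraceL triangleRho2) = 2 := by
  refine ⟨?_, ?_, ?_, ?_, ?_, ?_⟩
  · unfold measuredMI
    apply le_antisymm
    · exact Real.sSup_le (by rintro r ⟨ιA, ιB, P, Q, rfl⟩; exact miOf_rho1_le P Q) zero_le_one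
    · refine le_csSup ⟨1, ?_⟩
        ⟨Fin 2 × Fin 2, Fin 2 × Fin 2, compPVM _, compPVM _, miOf_comp_rho1.symm⟩
      rintro r ⟨ιA, ιB, P, Q, rfl⟩
      exact miOf_rho1_le P Q
  · unfold measuredMI
    apply le_antisymm
    · exact Real.sSup_le (by rintro r ⟨ιA, ιB, P, Q, rfl⟩; exact miOf_rho2_le P Q) (by norm_num)
    · refine le_csSup ⟨2, ?_⟩
        ⟨Fin 2 × Fin 2, Fin 2 × Fin 2, compPVM _, compPVM _, miOf_comp_rho2.symm⟩
      rintro r ⟨ιA, ιB, P, Q, rfl⟩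
      exact miOf_rho2_le P Q
  · rw [ptraceR_rho1]; exact vnEntropy_quarter
  · rw [ptraceL_rho1]; exact vnEntropy_quarter
  · rw [ptraceR_rho2]; exact vnEntropy_quarter
  · rw [ptraceL_rho2]; exact vnEntropy_quarter

end
end
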